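/- arXiv:2312.02455 — 4 statements merged into one kernel-verified Lean document; each statement's English description precedes it below -/
import Mathlib

section
/- For every r > 0, Φ(r)/16 ≤ Φ(2r) ≤ 3 Φ(r). -/
open MeasureTheory ProbabilityTheory Filter Set Topology Metric RealInnerProductSpace
open scoped ENNReal NNReal

noncomputable section

abbrev Euc (d : ℕ) : Type := EuclideanSpace ℝ (Fin d)

/-- First exit time from `B` of the process started at `x`, valued in `[0,∞]`
(`∞` if the process never leaves `B`). -/
def exitTime {Ω : Type} {d : ℕ} (Y : ℝ → Ω → Euc d) (x : Euc d) (B : Set (Euc d)) (ω : Ω) :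
    ℝ≥0∞ :=
  sInf (ENNReal.ofReal '' {t : ℝ | 0 ≤ t ∧ x + Y t ω ∉ B})

/-- `E_x[τ_B]`, the expected exit time from `B` for the process started at `x`. -/
def expExit {Ω : Type} [MeasurableSpace Ω] {d : ℕ} (P : Measure Ω) (Y : ℝ → Ω → Euc d)
    (x : Euc d) (B : Set (Euc d)) : ℝ≥0∞ :=
  ∫⁻ ω, exitTime Y x B ω ∂P

/-- `h(X_{τ_B})` on the event `{τ_B < ∞}` (and `0` elsewhere), as an `ℝ≥0∞`-valued quantity. -/
def stopVal {Ω : Type} {d : ℕ} (Y : ℝ → Ω → Euc d) (h : Euc d → ℝ) (x : Euc d)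
    (B : Set (Euc d)) (ω : Ω) : ℝ≥0∞ :=
  if exitTime Y x B ω < ⊤ then ENNReal.ofReal (h (x + Y (exitTime Y x B ω).toReal ω)) else 0

/-- `E_x[h(X_{τ_B})]` for a nonnegative `h`. -/
def expStop {Ω : Type} [MeasurableSpace Ω] {d : ℕ} (P : Measure Ω) (Y : ℝ → Ω → Euc d)
    (h : Euc d → ℝ) (x : Euc d) (B : Set (Euc d)) : ℝ≥0∞ :=
  ∫⁻ ω, stopVal Y h x B ω ∂P

/-- `h` is harmonic in the open set `U` with respect to the process `x + Y`. -/
def HarmonicOn {Ω : Type} [MeasurableSpace Ω] {d : ℕ} (P : Measure Ω) (Y : ℝ → Ω → Euc d)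
    (h : Euc d → ℝ) (U : Set (Euc d)) : Prop :=
  ∀ B : Set (Euc d), IsOpen B → IsCompact (closure B) → closure B ⊆ U → ∀ x ∈ B,
    expStop P Y h x B ≠ ⊤ ∧ ENNReal.ofReal (h x) = expStop P Y h x B

/-- `h` vanishes continuously on `E`: it is zero on `E` and continuous at every point of `E`. -/
def VanishesContinuouslyOn {d : ℕ} (h : Euc d → ℝ) (E : Set (Euc d)) : Prop :=
  (∀ z ∈ E, h z = 0) ∧ ∀ z ∈ E, ContinuousAt h z

/-- A Lévy-like process: starts at `0`, a.s. càdlàg paths,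
stationary and independent increments. -/
structure IsLevyLike {Ω : Type} [MeasurableSpace Ω] {d : ℕ} (P : Measure Ω)
    (Y : ℝ → Ω → Euc d) : Prop where
  isProb : IsProbabilityMeasure P
  meas : ∀ t : ℝ, Measurable (Y t)
  start : ∀ᵐ ω ∂P, Y 0 ω = 0
  rightCont : ∀ᵐ ω ∂P, ∀ t : ℝ, 0 ≤ t → ContinuousWithinAt (fun s => Y s ω) (Ici t) t
  leftLim : ∀ᵐ ω ∂P, ∀ t : ℝ, 0 < t → ∃ L, Tendsto (fun s => Y s ω) (𝓝[<] t) (𝓝 L)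
  statInc : ∀ s t : ℝ, 0 ≤ s → s ≤ t →
    P.map (fun ω => Y t ω - Y s ω) = P.map (fun ω => Y (t - s) ω)
  indInc : ∀ n : ℕ, ∀ τ : Fin (n + 1) → ℝ, Monotone τ → 0 ≤ τ 0 →
    iIndepFun
      (fun i : Fin n => fun ω => Y (τ i.succ) ω - Y (τ i.castSucc) ω) P

/-- The process `Y` has characteristic exponent `ψ`:
`E[exp(i⟪u, Y_t⟫)] = exp(t ψ(u))`. -/
def HasCharExponent {Ω : Type} [MeasurableSpace Ω] {d : ℕ} (P : Measure Ω)
    (Y : ℝ → Ω → Euc d) (ψ : Euc d → ℂ) : Prop :=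
  ∀ u : Euc d, ∀ t : ℝ, 0 ≤ t →
    ∫ ω, Complex.exp (Complex.I * (⟪u, Y t ω⟫ : ℂ)) ∂P = Complex.exp ((t : ℂ) * ψ u)

/-- Laplace exponent `φ(s) = s + ∫₀^∞ (1 - e^{-st}) μ(dt)` (unit drift). -/
def laplaceExp (μm : Measure ℝ) (s : ℝ) : ℝ :=
  s + ∫ t, (1 - Real.exp (-(s * t))) ∂μm

/-- `μm` is a nonzero Lévy measure of a subordinator: carried by `(0,∞)` and
`∫ (1 ∧ t) μ(dt) < ∞`. -/
def IsLevyMeasure1D (μm : Measure ℝ) : Prop :=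
  μm ≠ 0 ∧ μm (Iic 0) = 0 ∧ (∫⁻ t, ENNReal.ofReal (min 1 t) ∂μm) < ⊤

/-- `μm` has a density `ρ` w.r.t. Lebesgue measure with `ρ(t) ≤ c ρ(2t)` on `(0,8)` and
`ρ(t) ≤ c ρ(t+1)` on `(1,∞)`. -/
def HasGoodDensity (μm : Measure ℝ) : Prop :=
  ∃ ρ : ℝ → ℝ, Measurable ρ ∧ (∀ t, 0 ≤ ρ t) ∧
    μm = volume.withDensity (fun t => ENNReal.ofReal (ρ t)) ∧
    ∃ c : ℝ, 0 < c ∧ (∀ t ∈ Ioo (0 : ℝ) 8, ρ t ≤ c * ρ (2 * t)) ∧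
      ∀ t ∈ Ioi (1 : ℝ), ρ t ≤ c * ρ (t + 1)

/-- Subordinate Brownian motion with Gaussian component and Laplace exponent `φ`:
a Lévy-like process with `E[exp(i⟪u, Y_t⟫)] = exp(-t φ(|u|²))`. -/
def IsSubordinateBM {Ω : Type} [MeasurableSpace Ω] {d : ℕ} (P : Measure Ω)
    (Y : ℝ → Ω → Euc d) (φ : ℝ → ℝ) : Prop :=
  IsLevyLike P Y ∧ HasCharExponent P Y fun u => ((-(φ (‖u‖ ^ 2)) : ℝ) : ℂ)

/-- Identification of `ℝ^{d-1} × ℝ` with `ℝ^d` (the last coordinate being the real factor). -/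
def embedPair (d : ℕ) (p : EuclideanSpace ℝ (Fin (d - 1)) × ℝ) : Euc d :=
  (EuclideanSpace.equiv (Fin d) ℝ).symm fun i => if h : (i : ℕ) < d - 1 then p.1 ⟨i, h⟩ else p.2

/-- `D` is a Lipschitz domain with characteristics `(R₀, Λ₀)`. -/
def IsLipschitzDomain (d : ℕ) (D : Set (Euc d)) (R₀ Λ₀ : ℝ) : Prop :=
  IsOpen D ∧ IsConnected D ∧
    ∀ z ∈ frontier D, ∃ O : Euc d ≃ₗᵢ[ℝ] Euc d, ∃ ψ : EuclideanSpace ℝ (Fin (d - 1)) → ℝ,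
      LipschitzWith Λ₀.toNNReal ψ ∧ ψ 0 = 0 ∧
      ball z R₀ ∩ D =
        (fun p : EuclideanSpace ℝ (Fin (d - 1)) × ℝ => z + O (embedPair d p)) ''
          {p | ‖embedPair d p‖ < R₀ ∧ ψ p.1 < p.2}

/-- The last coordinate of a vector in `ℝ^d` (junk value `0` if `d = 0`). -/
def lastCoord {d : ℕ} (x : Euc d) : ℝ :=
  if h : 0 < d then x ⟨d - 1, Nat.sub_lt h Nat.one_pos⟩ else 0

/-- The truncated circular cone `Γ_θ(r)` with vertex `0`, angle `θ` and axis along the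
positive last-coordinate direction. -/
def cone (d : ℕ) (θ r : ℝ) : Set (Euc d) :=
  {x | ‖x‖ < r ∧ ‖x‖ * Real.cos θ < lastCoord x}

/-- `D` satisfies the interior cone condition with common angle `θ`. -/
def InteriorConeCondition (d : ℕ) (D : Set (Euc d)) (θ : ℝ) : Prop :=
  ∃ a₀ : ℝ, 0 < a₀ ∧ ∀ z ∈ frontier D, ∃ R : Euc d ≃ₗᵢ[ℝ] Euc d,
    LinearEquiv.det R.toLinearEquiv = 1 ∧ (fun y => z + R y) '' cone d θ a₀ ⊆ D


/-- `D` is a `C¹` domain (with a uniform modulus of continuity for the gradients of the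
local boundary functions). -/
def IsC1Domain (d : ℕ) (D : Set (Euc d)) : Prop :=
  IsOpen D ∧ IsConnected D ∧
    ∃ R₀ : ℝ, 0 < R₀ ∧ ∃ f : ℝ → ℝ, (∀ s, 0 ≤ f s) ∧ f 0 = 0 ∧
      Tendsto f (𝓝[>] 0) (𝓝 0) ∧
      ∀ z ∈ frontier D, ∃ O : Euc d ≃ₗᵢ[ℝ] Euc d, ∃ ψ : EuclideanSpace ℝ (Fin (d - 1)) → ℝ,
        ContDiff ℝ 1 ψ ∧ ψ 0 = 0 ∧ fderiv ℝ ψ 0 = 0 ∧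
        (∀ a b : EuclideanSpace ℝ (Fin (d - 1)), ‖fderiv ℝ ψ a - fderiv ℝ ψ b‖ ≤ f ‖a - b‖) ∧
        ball z R₀ ∩ D =
          (fun p : EuclideanSpace ℝ (Fin (d - 1)) × ℝ => z + O (embedPair d p)) ''
            {p | ‖embedPair d p‖ < R₀ ∧ ψ p.1 < p.2}

/-- The event that the process started at `x` leaves `B` in finite time and lands in `A`
at the exit time. -/
def exitEvent {Ω : Type} {d : ℕ} (Y : ℝ → Ω → Euc d) (x : Euc d) (B A : Set (Euc d)) :
    Set Ω :=
  {ω | exitTime Y x B ω < ⊤ ∧ x + Y (exitTime Y x B ω).toReal ω ∈ A}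

/-- The hitting time `inf { t > 0 : x + Y_t ∈ A }`, valued in `[0,∞]`. -/
def hitTime {Ω : Type} {d : ℕ} (Y : ℝ → Ω → Euc d) (x : Euc d) (A : Set (Euc d)) (ω : Ω) :
    ℝ≥0∞ :=
  sInf (ENNReal.ofReal '' {t : ℝ | 0 < t ∧ x + Y t ω ∈ A})

def quadForm (d : ℕ) (A : Matrix (Fin d) (Fin d) ℝ) (u : Euc d) : ℝ :=
  ∑ i, ∑ j, u i * A i j * u j

/-- `(A, b, ν)` is a Lévy triple: `A` symmetric nonnegative-definite, and
`ν` a measure on `ℝ^d ∖ {0}` with `∫ (|z|² ∧ 1) ν(dz) < ∞`. -/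
def IsLevyTriple (d : ℕ) (A : Matrix (Fin d) (Fin d) ℝ) (b : Euc d)
    (ν : Measure (Euc d)) : Prop :=
  A.IsSymm ∧ (∀ u : Euc d, 0 ≤ quadForm d A u) ∧ ν {0} = 0 ∧
    (∫⁻ z, ENNReal.ofReal (min (‖z‖ ^ 2) 1) ∂ν) < ⊤

/-- The Lévy–Khintchine exponent `ψ` of the triple `(A, b, ν)`. -/
def levyExponent (d : ℕ) (A : Matrix (Fin d) (Fin d) ℝ) (b : Euc d) (ν : Measure (Euc d))
    (u : Euc d) : ℂ :=
  -(1 / 2 : ℂ) * (quadForm d A u : ℂ) + Complex.I * (⟪b, u⟫ : ℂ) +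
    ∫ z, (Complex.exp (Complex.I * (⟪u, z⟫ : ℂ)) - 1 -
      (if ‖z‖ ≤ 1 then Complex.I * (⟪u, z⟫ : ℂ) else 0)) ∂ν

/-- The truncated drift `b̃_r`. -/
def btilde {d : ℕ} (b : Euc d) (ν : Measure (Euc d)) (r : ℝ) : Euc d :=
  if r ≤ 1 then b - ∫ z in {z : Euc d | r < ‖z‖ ∧ ‖z‖ ≤ 1}, z ∂ν
  else b + ∫ z in {z : Euc d | 1 < ‖z‖ ∧ ‖z‖ ≤ r}, z ∂ν

/-- Pruitt's function
`Φ(r) = r^{-2} ∑ a_{ii} + ∫ ((|z|²/r²) ∧ 1) ν(dz) + |b̃_r|/r`. -/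
def Phi (d : ℕ) (A : Matrix (Fin d) (Fin d) ℝ) (b : Euc d) (ν : Measure (Euc d))
    (r : ℝ) : ℝ :=
  (∑ i, A i i) / r ^ 2 + (∫ z, min (‖z‖ ^ 2 / r ^ 2) 1 ∂ν) + ‖btilde b ν r‖ / r

/-- The running maximum `M_t = sup_{0 ≤ s ≤ t} |Y_s|`. -/
def runMax {Ω : Type} {d : ℕ} (Y : ℝ → Ω → Euc d) (t : ℝ) (ω : Ω) : ℝ :=
  sSup {x : ℝ | ∃ s : ℝ, 0 ≤ s ∧ s ≤ t ∧ x = ‖Y s ω‖}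

/-- `Y` is a Lévy process with Lévy triple `(A, b, ν)`:
a Lévy-like process with characteristic exponent the Lévy–Khintchine exponent of `(A, b, ν)`. -/
def IsLevyProcess {Ω : Type} [MeasurableSpace Ω] {d : ℕ} (P : Measure Ω)
    (Y : ℝ → Ω → Euc d) (A : Matrix (Fin d) (Fin d) ℝ) (b : Euc d)
    (ν : Measure (Euc d)) : Prop :=
  IsLevyLike P Y ∧ HasCharExponent P Y (levyExponent d A b ν)

/-- First exit time from `B` of a process `W` (which carries its own starting point). -/
def exitTimeW {Ω : Type} {d : ℕ} (W : ℝ → Ω → Euc d) (B : Set (Euc d)) (ω : Ω) : ℝ≥0∞ :=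
  sInf (ENNReal.ofReal '' {t : ℝ | 0 ≤ t ∧ W t ω ∉ B})

/-- `W` is a Brownian motion on `ℝ^d` with generator `Δ` started at `x`:
`W_0 = x` a.s., continuous sample paths, stationary independent increments, and
`E[exp(i⟪u, W_t − W_0⟫)] = exp(−t|u|²)`. -/
def IsBM {Ω : Type} [MeasurableSpace Ω] {d : ℕ} (P : Measure Ω) (W : ℝ → Ω → Euc d)
    (x : Euc d) : Prop :=
  IsProbabilityMeasure P ∧ (∀ t : ℝ, Measurable (W t)) ∧ (∀ᵐ ω ∂P, W 0 ω = x) ∧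
    (∀ᵐ ω ∂P, ContinuousOn (fun t => W t ω) (Ici 0)) ∧
    (∀ s t : ℝ, 0 ≤ s → s ≤ t →
      P.map (fun ω => W t ω - W s ω) = P.map (fun ω => W (t - s) ω - W 0 ω)) ∧
    (∀ n : ℕ, ∀ τ : Fin (n + 1) → ℝ, Monotone τ → 0 ≤ τ 0 →
      iIndepFun
        (fun i : Fin n => fun ω => W (τ i.succ) ω - W (τ i.castSucc) ω) P) ∧
    ∀ u : Euc d, ∀ t : ℝ, 0 ≤ t →
      ∫ ω, Complex.exp (Complex.I * (⟪u, W t ω - W 0 ω⟫ : ℂ)) ∂P =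
        Complex.exp (((-(t * ‖u‖ ^ 2)) : ℝ) : ℂ)

/-- The rescaled function `f_{z₀,r}(y) = f((y − z₀)/r)`. -/
def rescale {d : ℕ} (f : Euc d → ℝ) (z₀ : Euc d) (r : ℝ) : Euc d → ℝ :=
  fun w => f (r⁻¹ • (w - z₀))

section AuxPhiDoubling

variable {d : ℕ}

private lemma phi_annulus_meas (s t : ℝ) :
    MeasurableSet {z : Euc d | s < ‖z‖ ∧ ‖z‖ ≤ t} :=
  (measurableSet_lt measurable_const measurable_norm).inter
    (measurableSet_le measurable_norm measurable_const)

private lemma phi_integ_min_base (ν : Measure (Euc d))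
    (hν : (∫⁻ z, ENNReal.ofReal (min (‖z‖ ^ 2) 1) ∂ν) < ⊤) :
    Integrable (fun z : Euc d => min (‖z‖ ^ 2) 1) ν := by
  refine ⟨((continuous_norm.pow 2).min continuous_const).aestronglyMeasurable, ?_⟩
  rw [hasFiniteIntegral_iff_ofReal (ae_of_all _ fun z => le_min (by positivity) zero_le_one)]
  exact hν

private lemma phi_integ_min (ν : Measure (Euc d))
    (hν : (∫⁻ z, ENNReal.ofReal (min (‖z‖ ^ 2) 1) ∂ν) < ⊤) {r : ℝ} (hr : 0 < r) :
    Integrable (fun z : Euc d => min (‖z‖ ^ 2 / r ^ 2) 1) ν := by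
  have hbase := phi_integ_min_base ν hν
  refine (hbase.const_mul (1 / r ^ 2 + 1)).mono
    (((continuous_norm.pow 2).div_const _).min continuous_const).aestronglyMeasurable
    (ae_of_all _ fun z => ?_)
  have h0 : (0:ℝ) ≤ min (‖z‖ ^ 2 / r ^ 2) 1 := le_min (by positivity) zero_le_one
  have h1 : (0:ℝ) ≤ min (‖z‖ ^ 2) 1 := le_min (by positivity) zero_le_one
  rw [Real.norm_of_nonneg h0,
    Real.norm_of_nonneg (mul_nonneg (by positivity) h1)]
  have hrpos : (0:ℝ) < 1 / r ^ 2 := by positivity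
  rcases le_or_gt (‖z‖ ^ 2) 1 with h | h
  · rw [min_eq_left h]
    have h2 : min (‖z‖ ^ 2 / r ^ 2) 1 ≤ ‖z‖ ^ 2 / r ^ 2 := min_le_left _ _
    linarith [show (1 / r ^ 2 + 1) * ‖z‖ ^ 2 = ‖z‖ ^ 2 / r ^ 2 + ‖z‖ ^ 2 from by ring,
      sq_nonneg ‖z‖]
  · rw [min_eq_right h.le]
    have h2 : min (‖z‖ ^ 2 / r ^ 2) 1 ≤ 1 := min_le_right _ _
    nlinarith

private lemma phi_annulus_finite (ν : Measure (Euc d))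
    (hν : (∫⁻ z, ENNReal.ofReal (min (‖z‖ ^ 2) 1) ∂ν) < ⊤) {s : ℝ} (hs : 0 < s) (t : ℝ) :
    ν {z : Euc d | s < ‖z‖ ∧ ‖z‖ ≤ t} < ⊤ := by
  set ε := ENNReal.ofReal (min (s ^ 2) 1) with hε
  have hf : AEMeasurable (fun z : Euc d => ENNReal.ofReal (min (‖z‖ ^ 2) 1)) ν :=
    (ENNReal.measurable_ofReal.comp
      ((measurable_norm.pow_const 2).min measurable_const)).aemeasurable
  have key := mul_meas_ge_le_lintegral₀ hf ε
  have hεpos : 0 < ε := ENNReal.ofReal_pos.mpr (lt_min (by positivity) one_pos)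
  have hsub : {z : Euc d | s < ‖z‖ ∧ ‖z‖ ≤ t} ⊆
      {z : Euc d | ε ≤ ENNReal.ofReal (min (‖z‖ ^ 2) 1)} := fun z hz =>
    ENNReal.ofReal_le_ofReal (min_le_min (by nlinarith [hz.1, norm_nonneg z]) le_rfl)
  calc ν {z : Euc d | s < ‖z‖ ∧ ‖z‖ ≤ t}
      ≤ ν {z : Euc d | ε ≤ ENNReal.ofReal (min (‖z‖ ^ 2) 1)} := measure_mono hsub
    _ = ε⁻¹ * (ε * ν {z : Euc d | ε ≤ ENNReal.ofReal (min (‖z‖ ^ 2) 1)}) := by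
        rw [← mul_assoc, ENNReal.inv_mul_cancel hεpos.ne' ENNReal.ofReal_ne_top, one_mul]
    _ ≤ ε⁻¹ * ∫⁻ z, ENNReal.ofReal (min (‖z‖ ^ 2) 1) ∂ν := mul_le_mul_right key _
    _ < ⊤ := ENNReal.mul_lt_top (ENNReal.inv_lt_top.mpr hεpos) hν

private lemma phi_annulus_int (ν : Measure (Euc d))
    (hν : (∫⁻ z, ENNReal.ofReal (min (‖z‖ ^ 2) 1) ∂ν) < ⊤) {s : ℝ} (hs : 0 < s) (t : ℝ) :
    IntegrableOn (fun z : Euc d => z) {z : Euc d | s < ‖z‖ ∧ ‖z‖ ≤ t} ν := by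
  apply Measure.integrableOn_of_bounded (M := t) (phi_annulus_finite ν hν hs t).ne
    measurable_id.aestronglyMeasurable
  exact (ae_restrict_iff' (phi_annulus_meas s t)).2 (ae_of_all _ fun z hz => hz.2)

private lemma phi_btilde_step (b : Euc d) (ν : Measure (Euc d))
    (hν : (∫⁻ z, ENNReal.ofReal (min (‖z‖ ^ 2) 1) ∂ν) < ⊤) {r : ℝ} (hr : 0 < r) :
    btilde b ν (2 * r) = btilde b ν r + ∫ z in {z : Euc d | r < ‖z‖ ∧ ‖z‖ ≤ 2 * r}, z ∂ν := by
  have hint : ∀ s t : ℝ, 0 < s →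
      IntegrableOn (fun z : Euc d => z) {z : Euc d | s < ‖z‖ ∧ ‖z‖ ≤ t} ν :=
    fun s t hs => phi_annulus_int ν hν hs t
  have hsplit : ∀ s m t : ℝ, s ≤ m → m ≤ t → 0 < s →
      (∫ z in {z : Euc d | s < ‖z‖ ∧ ‖z‖ ≤ t}, z ∂ν) =
        (∫ z in {z : Euc d | s < ‖z‖ ∧ ‖z‖ ≤ m}, z ∂ν) +
          ∫ z in {z : Euc d | m < ‖z‖ ∧ ‖z‖ ≤ t}, z ∂ν := by
    intro s m t hsm hmt hs
    have hset : {z : Euc d | s < ‖z‖ ∧ ‖z‖ ≤ t} =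
        {z : Euc d | s < ‖z‖ ∧ ‖z‖ ≤ m} ∪ {z : Euc d | m < ‖z‖ ∧ ‖z‖ ≤ t} := by
      ext z
      simp only [Set.mem_setOf_eq, Set.mem_union]
      constructor
      · rintro ⟨h1, h2⟩
        rcases le_or_gt ‖z‖ m with h | h
        · exact Or.inl ⟨h1, h⟩
        · exact Or.inr ⟨h, h2⟩
      · rintro (⟨h1, h2⟩ | ⟨h1, h2⟩)
        · exact ⟨h1, h2.trans hmt⟩
        · exact ⟨lt_of_le_of_lt hsm h1, h2⟩
    have hdisj : Disjoint {z : Euc d | s < ‖z‖ ∧ ‖z‖ ≤ m} {z : Euc d | m < ‖z‖ ∧ ‖z‖ ≤ t} :=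
      Set.disjoint_left.2 fun z h1 h2 => absurd h2.1 (not_lt.2 h1.2)
    rw [hset, setIntegral_union hdisj (phi_annulus_meas m t) (hint s m hs)
      (hint m t (lt_of_lt_of_le hs hsm))]
  rcases le_or_gt (2 * r) 1 with h2 | h2
  · have h1 : r ≤ 1 := by linarith
    simp only [btilde]
    rw [if_pos h1, if_pos h2, hsplit r (2 * r) 1 (by linarith) h2 hr]
    abel
  · rcases le_or_gt r 1 with h1 | h1
    · simp only [btilde]
      rw [if_pos h1, if_neg (not_le.2 h2), hsplit r 1 (2 * r) h1 h2.le hr]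
      abel
    · simp only [btilde]
      rw [if_neg (not_le.2 h1), if_neg (not_le.2 h2),
        hsplit 1 r (2 * r) h1.le (by linarith) one_pos]
      abel

private lemma phi_norm_I (ν : Measure (Euc d))
    (hν : (∫⁻ z, ENNReal.ofReal (min (‖z‖ ^ 2) 1) ∂ν) < ⊤) {r : ℝ} (hr : 0 < r) :
    ‖∫ z in {z : Euc d | r < ‖z‖ ∧ ‖z‖ ≤ 2 * r}, z ∂ν‖ ≤
      2 * r * ∫ z, min (‖z‖ ^ 2 / r ^ 2) 1 ∂ν := by
  have hfin := phi_annulus_finite ν hν hr (2 * r)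
  have h1 : ‖∫ z in {z : Euc d | r < ‖z‖ ∧ ‖z‖ ≤ 2 * r}, z ∂ν‖ ≤
      2 * r * (ν {z : Euc d | r < ‖z‖ ∧ ‖z‖ ≤ 2 * r}).toReal :=
    norm_setIntegral_le_of_norm_le_const hfin fun z hz => hz.2
  have h2 : (ν {z : Euc d | r < ‖z‖ ∧ ‖z‖ ≤ 2 * r}).toReal ≤
      ∫ z, min (‖z‖ ^ 2 / r ^ 2) 1 ∂ν := by
    have hind : Integrable
        (Set.indicator {z : Euc d | r < ‖z‖ ∧ ‖z‖ ≤ 2 * r} fun _ => (1:ℝ)) ν :=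
      (integrableOn_const hfin.ne).integrable_indicator (phi_annulus_meas _ _)
    have heq : (ν {z : Euc d | r < ‖z‖ ∧ ‖z‖ ≤ 2 * r}).toReal =
        ∫ z, Set.indicator {z : Euc d | r < ‖z‖ ∧ ‖z‖ ≤ 2 * r} (fun _ => (1:ℝ)) z ∂ν := by
      rw [integral_indicator_const (1:ℝ) (phi_annulus_meas r (2 * r)), smul_eq_mul, mul_one]
      rfl
    rw [heq]
    refine integral_mono hind (phi_integ_min ν hν hr) fun z => ?_
    by_cases hz : z ∈ {z : Euc d | r < ‖z‖ ∧ ‖z‖ ≤ 2 * r}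
    · rw [Set.indicator_of_mem hz]
      refine le_min ?_ le_rfl
      rw [le_div_iff₀ (by positivity)]
      nlinarith [hz.1, norm_nonneg z]
    · rw [Set.indicator_of_notMem hz]
      exact le_min (by positivity) zero_le_one
  have hnn : (0:ℝ) ≤ 2 * r := by positivity
  calc ‖∫ z in {z : Euc d | r < ‖z‖ ∧ ‖z‖ ≤ 2 * r}, z ∂ν‖
      ≤ 2 * r * (ν {z : Euc d | r < ‖z‖ ∧ ‖z‖ ≤ 2 * r}).toReal := h1
    _ ≤ 2 * r * ∫ z, min (‖z‖ ^ 2 / r ^ 2) 1 ∂ν := by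
        exact mul_le_mul_of_nonneg_left h2 hnn

end AuxPhiDoubling

/-- Lemma 2.4: `Φ(r)/16 ≤ Φ(2r) ≤ 3 Φ(r)` for every `r > 0`. -/
theorem phi_doubling
    (d : ℕ) (hd : 1 ≤ d) (A : Matrix (Fin d) (Fin d) ℝ) (b : Euc d)
    (ν : Measure (Euc d)) (hT : IsLevyTriple d A b ν) (r : ℝ) (hr : 0 < r) :
    Phi d A b ν r / 16 ≤ Phi d A b ν (2 * r) ∧
      Phi d A b ν (2 * r) ≤ 3 * Phi d A b ν r := by
  obtain ⟨hsymm, hpos, hzero, hν⟩ := hT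
  have h2r : (0:ℝ) < 2 * r := by positivity
  -- diagonal entries are nonnegative
  have hS : (0:ℝ) ≤ ∑ i, A i i := by
    refine Finset.sum_nonneg fun i _ => ?_
    have hq : quadForm d A (EuclideanSpace.single i 1) = A i i := by
      simp [quadForm, EuclideanSpace.single_apply, mul_ite, ite_mul, Finset.sum_ite_eq']
    exact hq ▸ hpos _
  -- integrability of the truncated-square integrands
  have hj1_int := phi_integ_min ν hν hr
  have hj2_int := phi_integ_min ν hν h2r
  have hj1_nn : (0:ℝ) ≤ ∫ z, min (‖z‖ ^ 2 / r ^ 2) 1 ∂ν :=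
    integral_nonneg fun z => le_min (by positivity) zero_le_one
  have hj2_nn : (0:ℝ) ≤ ∫ z, min (‖z‖ ^ 2 / (2 * r) ^ 2) 1 ∂ν :=
    integral_nonneg fun z => le_min (by positivity) zero_le_one
  have hj2_le_j1 : (∫ z, min (‖z‖ ^ 2 / (2 * r) ^ 2) 1 ∂ν) ≤
      ∫ z, min (‖z‖ ^ 2 / r ^ 2) 1 ∂ν := by
    refine integral_mono hj2_int hj1_int fun z => min_le_min ?_ le_rfl
    gcongr
    nlinarith
  have hj1_le_4j2 : (∫ z, min (‖z‖ ^ 2 / r ^ 2) 1 ∂ν) ≤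
      4 * ∫ z, min (‖z‖ ^ 2 / (2 * r) ^ 2) 1 ∂ν := by
    rw [← integral_const_mul]
    refine integral_mono hj1_int (hj2_int.const_mul 4) fun z => ?_
    rcases le_or_gt 1 (‖z‖ ^ 2 / (2 * r) ^ 2) with h | h
    · rw [min_eq_right h]
      calc min (‖z‖ ^ 2 / r ^ 2) 1 ≤ 1 := min_le_right _ _
        _ ≤ 4 * 1 := by norm_num
    · rw [min_eq_left h.le]
      have he : 4 * (‖z‖ ^ 2 / (2 * r) ^ 2) = ‖z‖ ^ 2 / r ^ 2 := by
        field_simp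
        ring
      rw [he]
      exact min_le_left _ _
  -- drift comparison
  have hbt := phi_btilde_step b ν hν hr
  have hI := phi_norm_I ν hν hr
  have hk2 : ‖btilde b ν (2 * r)‖ ≤
      ‖btilde b ν r‖ + 2 * r * ∫ z, min (‖z‖ ^ 2 / r ^ 2) 1 ∂ν := by
    rw [hbt]
    exact (norm_add_le _ _).trans (by linarith)
  have hk1 : ‖btilde b ν r‖ ≤
      ‖btilde b ν (2 * r)‖ + 2 * r * ∫ z, min (‖z‖ ^ 2 / r ^ 2) 1 ∂ν := by
    have he : btilde b ν r =
        btilde b ν (2 * r) - ∫ z in {z : Euc d | r < ‖z‖ ∧ ‖z‖ ≤ 2 * r}, z ∂ν := by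
      rw [hbt]; abel
    rw [he]
    exact (norm_sub_le _ _).trans (by linarith)
  have hk1' : ‖btilde b ν r‖ / r ≤
      2 * (‖btilde b ν (2 * r)‖ / (2 * r)) + 2 * ∫ z, min (‖z‖ ^ 2 / r ^ 2) 1 ∂ν := by
    rw [show 2 * (‖btilde b ν (2 * r)‖ / (2 * r)) +
          2 * ∫ z, min (‖z‖ ^ 2 / r ^ 2) 1 ∂ν =
        (‖btilde b ν (2 * r)‖ + 2 * r * ∫ z, min (‖z‖ ^ 2 / r ^ 2) 1 ∂ν) / r from by
      field_simp]
    gcongr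
  have hk2' : ‖btilde b ν (2 * r)‖ / (2 * r) ≤
      ‖btilde b ν r‖ / r / 2 + ∫ z, min (‖z‖ ^ 2 / r ^ 2) 1 ∂ν := by
    rw [show ‖btilde b ν r‖ / r / 2 + ∫ z, min (‖z‖ ^ 2 / r ^ 2) 1 ∂ν =
        (‖btilde b ν r‖ + 2 * r * ∫ z, min (‖z‖ ^ 2 / r ^ 2) 1 ∂ν) / (2 * r) from by
      field_simp]
    gcongr
  have ha_nn : (0:ℝ) ≤ (∑ i, A i i) / r ^ 2 := by positivity
  have hu1_nn : (0:ℝ) ≤ ‖btilde b ν r‖ / r := by positivity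
  have hu2_nn : (0:ℝ) ≤ ‖btilde b ν (2 * r)‖ / (2 * r) := by positivity
  have hSr : (∑ i, A i i) / (2 * r) ^ 2 = (∑ i, A i i) / r ^ 2 / 4 := by
    rw [div_div]; ring
  constructor
  · simp only [Phi]
    rw [hSr]
    linarith
  · simp only [Phi]
    rw [hSr]
    linarith

end
end

section
/- Let f : ℝ^d → ℝ be twice continuously differentiable with M₀ := sup_y |f(y)|, M₁ := sup_y |∇f(y)|, and M₂ := sup_{y,i,j} |∂²f/∂y_i∂y_j (y)| all finite. For z₀ ∈ ℝ^d and r > 0 define f_{z₀,r}(y) := f((y − z₀)/r). Then for every y ∈ ℝ^d the function z ↦ f_{z₀,r}(y+z) − f_{z₀,r}(y) − ⟨∇f_{z₀,r}(y), z⟩·1_{|z|≤1} is ν-integrable, and the generator expression 𝓛 f_{z₀,r}(y) := (1/2) ∑_{i,j=1}^d a_{ij} ∂²f_{z₀,r}/∂y_i∂y_j (y) + ⟨b, ∇f_{z₀,r}(y)⟩ + ∫_{ℝ^d∖{0}} ( f_{z₀,r}(y+z) − f_{z₀,r}(y) − ⟨∇f_{z₀,r}(y), z⟩·1_{|z|≤1}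 ) ν(dz) satisfies |𝓛 f_{z₀,r}(y)| ≤ (d·M₂ + M₁ + 2·M₀) · Φ(r) for all y ∈ ℝ^d, z₀ ∈ ℝ^d, and r > 0. -/
open MeasureTheory ProbabilityTheory Filter Set Topology Metric RealInnerProductSpace
open scoped ENNReal NNReal

noncomputable section

section Helpers
variable {d : ℕ} {f : Euc d → ℝ} {z₀ : Euc d} {r M₀ M₁ M₂ : ℝ} {A : Matrix (Fin d) (Fin d) ℝ}
  {ν : Measure (Euc d)}

lemma sum_abs_le_sqrt_mul_norm {d : ℕ} (u : Euc d) : ∑ i, |u i| ≤ Real.sqrt d * ‖u‖ := by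
  have h := real_inner_le_norm ((EuclideanSpace.equiv (Fin d) ℝ).symm fun i => |u i|)
    ((EuclideanSpace.equiv (Fin d) ℝ).symm fun _ => (1:ℝ))
  have h1 : ⟪((EuclideanSpace.equiv (Fin d) ℝ).symm fun i => |u i|),
      ((EuclideanSpace.equiv (Fin d) ℝ).symm fun _ => (1:ℝ))⟫ = ∑ i, |u i| := by
    simp [EuclideanSpace.inner_eq_star_dotProduct, dotProduct]
  have h2 : ‖((EuclideanSpace.equiv (Fin d) ℝ).symm fun i => |u i|)‖ = ‖u‖ := by
    rw [EuclideanSpace.norm_eq, EuclideanSpace.norm_eq]; simp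
  have h3 : ‖((EuclideanSpace.equiv (Fin d) ℝ).symm fun _ => (1:ℝ))‖ = Real.sqrt d := by
    rw [EuclideanSpace.norm_eq]; simp
  rw [h1, h2, h3] at h
  linarith [h]

lemma euc_decomp {d : ℕ} (u : Euc d) :
    ∑ i, u i • EuclideanSpace.single i (1:ℝ) = u := by
  ext j
  rw [WithLp.ofLp_sum, Finset.sum_apply]
  simp [EuclideanSpace.single_apply]

lemma lin_bound {d : ℕ} (L : Euc d →L[ℝ] ℝ) {c : ℝ} (hc : 0 ≤ c)
    (h : ∀ i, |L (EuclideanSpace.single i 1)| ≤ c) (u : Euc d) :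
    |L u| ≤ Real.sqrt d * c * ‖u‖ := by
  have hu : L u = ∑ i, u i * L (EuclideanSpace.single i 1) := by
    conv_lhs => rw [← euc_decomp u]
    simp [map_sum]
  rw [hu]
  calc |∑ i, u i * L (EuclideanSpace.single i 1)| ≤ ∑ i, |u i * L (EuclideanSpace.single i 1)| :=
        Finset.abs_sum_le_sum_abs _ _
    _ ≤ ∑ i, |u i| * c := by
        refine Finset.sum_le_sum fun i _ => ?_
        rw [abs_mul]
        exact mul_le_mul_of_nonneg_left (h i) (abs_nonneg _)
    _ = (∑ i, |u i|) * c := by rw [Finset.sum_mul]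
    _ ≤ (Real.sqrt d * ‖u‖) * c :=
        mul_le_mul_of_nonneg_right (sum_abs_le_sqrt_mul_norm u) hc
    _ = Real.sqrt d * c * ‖u‖ := by ring

lemma bil_opnorm {d : ℕ} (B : Euc d →L[ℝ] (Euc d →L[ℝ] ℝ)) {c : ℝ} (hc : 0 ≤ c)
    (h : ∀ i j, |B (EuclideanSpace.single i 1) (EuclideanSpace.single j 1)| ≤ c) :
    ‖B‖ ≤ d * c := by
  have key : ∀ u v, |B u v| ≤ (d * c) * ‖u‖ * ‖v‖ := by
    intro u v
    have h1 : ∀ j, |B u (EuclideanSpace.single j 1)| ≤ Real.sqrt d * c * ‖u‖ := by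
      intro j
      have : (fun w => B w (EuclideanSpace.single j 1)) = fun w => (B.flip (EuclideanSpace.single j 1)) w := by
        ext w; simp
      exact lin_bound (B.flip (EuclideanSpace.single j 1)) hc (fun i => h i j) u
    have h2 := lin_bound (B u) (c := Real.sqrt d * c * ‖u‖)
      (by positivity) h1 v
    calc |B u v| ≤ Real.sqrt d * (Real.sqrt d * c * ‖u‖) * ‖v‖ := h2
      _ = (Real.sqrt d * Real.sqrt d) * c * ‖u‖ * ‖v‖ := by ring
      _ = (d * c) * ‖u‖ * ‖v‖ := by
          rw [Real.mul_self_sqrt (Nat.cast_nonneg d)]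
  refine B.opNorm_le_bound (by positivity) fun u => ?_
  refine (B u).opNorm_le_bound (by positivity) fun v => ?_
  calc ‖B u v‖ = |B u v| := rfl
    _ ≤ (d*c) * ‖u‖ * ‖v‖ := key u v
    _ = (d*c) * ‖u‖ * ‖v‖ := rfl

lemma hasFDerivAt_inner (z₀' : Euc d) (r' : ℝ) (w : Euc d) :
    HasFDerivAt (fun w : Euc d => r'⁻¹ • (w - z₀')) (r'⁻¹ • ContinuousLinearMap.id ℝ (Euc d)) w :=
  ((hasFDerivAt_id w).sub_const z₀').const_smul r'⁻¹

lemma hasFDerivAt_rescale (hf : ContDiff ℝ 2 f) (w : Euc d) :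
    HasFDerivAt (rescale f z₀ r) (r⁻¹ • fderiv ℝ f (r⁻¹ • (w - z₀))) w := by
  have h := ((hf.differentiable (by norm_num)).differentiableAt.hasFDerivAt
    (x := r⁻¹ • (w - z₀))).comp w (hasFDerivAt_inner z₀ r w)
  exact h.congr_fderiv (by ext v; simp)

lemma fderiv_rescale (hf : ContDiff ℝ 2 f) (w : Euc d) :
    fderiv ℝ (rescale f z₀ r) w = r⁻¹ • fderiv ℝ f (r⁻¹ • (w - z₀)) :=
  (hasFDerivAt_rescale hf w).fderiv

lemma hasFDerivAt_fderiv_rescale (hf : ContDiff ℝ 2 f) (w : Euc d) :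
    HasFDerivAt (fderiv ℝ (rescale f z₀ r))
      (r⁻¹ • ((fderiv ℝ (fderiv ℝ f) (r⁻¹ • (w - z₀))).comp
        (r⁻¹ • ContinuousLinearMap.id ℝ (Euc d)))) w := by
  have hdf : ContDiff ℝ 1 (fderiv ℝ f) := hf.fderiv_right (by norm_num)
  have h := (((hdf.differentiable (by norm_num)).differentiableAt.hasFDerivAt
    (x := r⁻¹ • (w - z₀))).comp w (hasFDerivAt_inner z₀ r w)).const_smul r⁻¹
  apply h.congr_of_eventuallyEq
  filter_upwards with u
  rw [fderiv_rescale hf u]; rfl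

lemma fderiv2_rescale_apply (hf : ContDiff ℝ 2 f) (w : Euc d) (u v : Euc d) :
    fderiv ℝ (fderiv ℝ (rescale f z₀ r)) w u v
      = r⁻¹ * (r⁻¹ * fderiv ℝ (fderiv ℝ f) (r⁻¹ • (w - z₀)) u v) := by
  rw [(hasFDerivAt_fderiv_rescale hf w).fderiv]
  simp

lemma fderiv_rescale_norm (hf : ContDiff ℝ 2 f) (hr : 0 < r)
    (hM₁ : ∀ y : Euc d, ‖fderiv ℝ f y‖ ≤ M₁) (w : Euc d) :
    ‖fderiv ℝ (rescale f z₀ r) w‖ ≤ M₁ / r := by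
  rw [fderiv_rescale hf w, norm_smul]
  rw [norm_inv, Real.norm_eq_abs, abs_of_pos hr, div_eq_inv_mul]
  exact mul_le_mul_of_nonneg_left (hM₁ _) (by positivity)

lemma fderiv2_rescale_entry (hf : ContDiff ℝ 2 f) (hr : 0 < r)
    (hM₂ : ∀ (y : Euc d) (i j : Fin d),
      |fderiv ℝ (fderiv ℝ f) y (EuclideanSpace.single i 1) (EuclideanSpace.single j 1)| ≤ M₂)
    (w : Euc d) (i j : Fin d) :
    |fderiv ℝ (fderiv ℝ (rescale f z₀ r)) w (EuclideanSpace.single i 1)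
      (EuclideanSpace.single j 1)| ≤ M₂ / r ^ 2 := by
  rw [fderiv2_rescale_apply hf w _ _]
  rw [abs_mul, abs_mul, abs_inv, abs_of_pos hr]
  have := hM₂ (r⁻¹ • (w - z₀)) i j
  have h2 : (0:ℝ) < r⁻¹ := by positivity
  calc r⁻¹ * (r⁻¹ * |fderiv ℝ (fderiv ℝ f) (r⁻¹ • (w - z₀)) (EuclideanSpace.single i 1) (EuclideanSpace.single j 1)|)
      ≤ r⁻¹ * (r⁻¹ * M₂) := by
        refine mul_le_mul_of_nonneg_left (mul_le_mul_of_nonneg_left this h2.le) h2.le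
    _ = M₂ / r ^ 2 := by rw [sq, div_eq_mul_inv, mul_inv]; ring

lemma fderiv2_rescale_opnorm (hf : ContDiff ℝ 2 f) (hr : 0 < r)
    (hM₂ : ∀ (y : Euc d) (i j : Fin d),
      |fderiv ℝ (fderiv ℝ f) y (EuclideanSpace.single i 1) (EuclideanSpace.single j 1)| ≤ M₂)
    (hM₂0 : 0 ≤ M₂) (w : Euc d) :
    ‖fderiv ℝ (fderiv ℝ (rescale f z₀ r)) w‖ ≤ d * M₂ / r ^ 2 := by
  have := bil_opnorm (fderiv ℝ (fderiv ℝ (rescale f z₀ r)) w) (c := M₂ / r^2)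
    (by positivity) (fderiv2_rescale_entry hf hr hM₂ w)
  calc ‖fderiv ℝ (fderiv ℝ (rescale f z₀ r)) w‖ ≤ d * (M₂ / r^2) := this
    _ = d * M₂ / r^2 := by ring

lemma fderiv_rescale_lip (hf : ContDiff ℝ 2 f) (hr : 0 < r)
    (hM₂ : ∀ (y : Euc d) (i j : Fin d),
      |fderiv ℝ (fderiv ℝ f) y (EuclideanSpace.single i 1) (EuclideanSpace.single j 1)| ≤ M₂)
    (hM₂0 : 0 ≤ M₂) (a b : Euc d) :
    ‖fderiv ℝ (rescale f z₀ r) a - fderiv ℝ (rescale f z₀ r) b‖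
      ≤ (d * M₂ / r ^ 2) * ‖a - b‖ := by
  refine Convex.norm_image_sub_le_of_norm_hasFDerivWithin_le
    (f' := fun x => fderiv ℝ (fderiv ℝ (rescale f z₀ r)) x)
    (fun x _ => ((hasFDerivAt_fderiv_rescale hf x).differentiableAt.hasFDerivAt).hasFDerivWithinAt)
    (fun x _ => fderiv2_rescale_opnorm hf hr hM₂ hM₂0 x) convex_univ (mem_univ b) (mem_univ a)

lemma rescale_taylor (hf : ContDiff ℝ 2 f) (hr : 0 < r)
    (hM₂ : ∀ (y : Euc d) (i j : Fin d),
      |fderiv ℝ (fderiv ℝ f) y (EuclideanSpace.single i 1) (EuclideanSpace.single j 1)| ≤ M₂)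
    (hM₂0 : 0 ≤ M₂) (y z : Euc d) :
    |rescale f z₀ r (y + z) - rescale f z₀ r y - fderiv ℝ (rescale f z₀ r) y z|
      ≤ (d * M₂ / r ^ 2) * ‖z‖ ^ 2 := by
  set g := rescale f z₀ r
  set C : ℝ := d * M₂ / r ^ 2 with hC
  have hC0 : 0 ≤ C := by positivity
  set h : Euc d → ℝ := fun w => g (y + w) - fderiv ℝ g y w with hh
  have hder : ∀ w : Euc d, HasFDerivAt h (fderiv ℝ g (y + w) - fderiv ℝ g y) w := by
    intro w
    have h1 : HasFDerivAt (fun w : Euc d => g (y + w)) (fderiv ℝ g (y + w)) w := by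
      have := (hasFDerivAt_rescale (z₀ := z₀) (r := r) hf (y + w)).comp w
        ((hasFDerivAt_id w).const_add y)
      rw [fderiv_rescale hf (y + w)]
      exact this.congr_fderiv (by ext v; simp)
    exact h1.sub ((fderiv ℝ g y).hasFDerivAt)
  have key := Convex.norm_image_sub_le_of_norm_hasFDerivWithin_le
    (f := h) (f' := fun w => fderiv ℝ g (y + w) - fderiv ℝ g y) (s := Metric.closedBall 0 ‖z‖)
    (C := C * ‖z‖)
    (fun x _ => (hder x).hasFDerivWithinAt)
    (fun x hx => by
      calc ‖fderiv ℝ g (y + x) - fderiv ℝ g y‖ ≤ C * ‖(y + x) - y‖ :=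
            fderiv_rescale_lip hf hr hM₂ hM₂0 _ _
        _ = C * ‖x‖ := by rw [add_sub_cancel_left]
        _ ≤ C * ‖z‖ := by
            refine mul_le_mul_of_nonneg_left ?_ hC0
            simpa using Metric.mem_closedBall.mp hx)
    (convex_closedBall 0 ‖z‖) (Metric.mem_closedBall_self (norm_nonneg z))
    (mem_closedBall_zero_iff.mpr (le_refl ‖z‖))
  have h0 : h 0 = g y := by simp [hh]
  have hz : h z = g (y + z) - fderiv ℝ g y z := rfl
  rw [hz, h0] at key
  simp only [sub_zero] at key
  calc |g (y + z) - g y - fderiv ℝ g y z| = ‖g (y + z) - fderiv ℝ g y z - g y‖ := by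
        rw [Real.norm_eq_abs]; ring_nf
    _ ≤ C * ‖z‖ * ‖z‖ := key
    _ = C * ‖z‖ ^ 2 := by ring

lemma quad_single (i : Fin d) : quadForm d A (EuclideanSpace.single i 1) = A i i := by
  simp [quadForm, EuclideanSpace.single_apply, ite_mul, mul_ite, Finset.sum_ite_eq]

lemma quad_pair (i j : Fin d) (hij : i ≠ j) (t : ℝ) :
    quadForm d A (EuclideanSpace.single i 1 + t • EuclideanSpace.single j 1)
      = A i i + t * A i j + t * A j i + t * t * A j j := by
  simp only [quadForm, PiLp.add_apply, PiLp.smul_apply, EuclideanSpace.single_apply,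
    smul_eq_mul]
  simp [add_mul, mul_add, Finset.sum_add_distrib, ite_mul, mul_ite, Finset.sum_ite_eq,
    Finset.sum_ite_eq', hij, hij.symm]
  ring

lemma entry_bound (hs : A.IsSymm) (hpos : ∀ u, 0 ≤ quadForm d A u) (i j : Fin d) :
    |A i j| ≤ (A i i + A j j) / 2 := by
  rcases eq_or_ne i j with rfl | hij
  · have := hpos (EuclideanSpace.single i 1)
    rw [quad_single] at this
    rw [abs_of_nonneg this]; linarith
  · have h1 := hpos (EuclideanSpace.single i 1 + (1:ℝ) • EuclideanSpace.single j 1)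
    have h2 := hpos (EuclideanSpace.single i 1 + (-1:ℝ) • EuclideanSpace.single j 1)
    rw [quad_pair i j hij] at h1 h2
    have hsym := Matrix.IsSymm.apply hs j i
    rw [abs_le]
    constructor <;> nlinarith [h1, h2]

lemma sum_bound (habs : ∀ i j, |A i j| ≤ (A i i + A j j)/2) {c : ℝ} (hc : 0 ≤ c)
    (H : Fin d → Fin d → ℝ) (hH : ∀ i j, |H i j| ≤ c) :
    |∑ i, ∑ j, A i j * H i j| ≤ (d : ℝ) * (∑ i, A i i) * c := by
  have step : ∀ i j : Fin d, |A i j * H i j| ≤ (A i i + A j j)/2 * c := by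
    intro i j
    rw [abs_mul]
    exact mul_le_mul (habs i j) (hH i j) (abs_nonneg _)
      (le_trans (abs_nonneg _) (habs i j))
  calc |∑ i, ∑ j, A i j * H i j| ≤ ∑ i, |∑ j, A i j * H i j| := Finset.abs_sum_le_sum_abs _ _
    _ ≤ ∑ i, ∑ j, |A i j * H i j| :=
        Finset.sum_le_sum fun i _ => Finset.abs_sum_le_sum_abs _ _
    _ ≤ ∑ i : Fin d, ∑ j : Fin d, (A i i + A j j)/2 * c :=
        Finset.sum_le_sum fun i _ => Finset.sum_le_sum fun j _ => step i j
    _ = (d : ℝ) * (∑ i, A i i) * c := by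
        simp only [add_div, add_mul, Finset.sum_add_distrib, Finset.sum_const,
          Finset.card_univ, Fintype.card_fin, nsmul_eq_mul, ← Finset.sum_mul, ← Finset.mul_sum]
        simp only [← Finset.sum_div, ← Finset.sum_mul]
        ring

lemma integrable_min_sq (hν : (∫⁻ z, ENNReal.ofReal (min (‖z‖ ^ 2) 1) ∂ν) < ⊤) :
    Integrable (fun z : Euc d => min (‖z‖ ^ 2) 1) ν := by
  refine ⟨(((continuous_norm.pow 2).min continuous_const).aestronglyMeasurable), ?_⟩
  rw [hasFiniteIntegral_iff_norm]
  calc ∫⁻ z, ENNReal.ofReal ‖min (‖z‖ ^ 2) 1‖ ∂ν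
      = ∫⁻ z, ENNReal.ofReal (min (‖z‖ ^ 2) 1) ∂ν := by
        refine lintegral_congr fun z => ?_
        rw [Real.norm_eq_abs, abs_of_nonneg (le_min (by positivity) zero_le_one)]
    _ < ⊤ := hν

lemma min_div_le (r a : ℝ) (ha : 0 ≤ a) :
    min (a / r ^ 2) 1 ≤ max ((r^2)⁻¹) 1 * min a 1 := by
  rcases le_or_gt a 1 with h | h
  · rw [min_eq_left h]
    calc min (a / r^2) 1 ≤ a / r^2 := min_le_left _ _
      _ = (r^2)⁻¹ * a := by rw [div_eq_inv_mul]
      _ ≤ max ((r^2)⁻¹) 1 * a := mul_le_mul_of_nonneg_right (le_max_left _ _) ha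
  · rw [min_eq_right h.le]
    calc min (a / r^2) 1 ≤ 1 := min_le_right _ _
      _ ≤ max ((r^2)⁻¹) 1 * 1 := by
          rw [mul_one]; exact le_max_right _ _

lemma integrable_min_sq_div (hν : (∫⁻ z, ENNReal.ofReal (min (‖z‖ ^ 2) 1) ∂ν) < ⊤) (r : ℝ) :
    Integrable (fun z : Euc d => min (‖z‖ ^ 2 / r ^ 2) 1) ν := by
  refine Integrable.mono' ((integrable_min_sq hν).const_mul (max ((r^2)⁻¹) 1))
    ((((continuous_norm.pow 2).div_const _).min continuous_const).aestronglyMeasurable) ?_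
  filter_upwards with z
  rw [Real.norm_eq_abs, abs_of_nonneg (le_min (by positivity) zero_le_one)]
  exact min_div_le r _ (by positivity)

lemma annulus_measurable (r1 r2 : ℝ) : MeasurableSet {z : Euc d | r1 < ‖z‖ ∧ ‖z‖ ≤ r2} :=
  (measurableSet_lt measurable_const measurable_norm).inter
    (measurableSet_le measurable_norm measurable_const)

lemma annulus_finite (hν : (∫⁻ z, ENNReal.ofReal (min (‖z‖ ^ 2) 1) ∂ν) < ⊤)
    {r1 : ℝ} (r2 : ℝ) (h1 : 0 < r1) : ν {z : Euc d | r1 < ‖z‖ ∧ ‖z‖ ≤ r2} < ⊤ := by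
  set c := min (r1 ^ 2) 1 with hcdef
  have hc : 0 < c := lt_min (by positivity) one_pos
  have hsub : {z : Euc d | r1 < ‖z‖ ∧ ‖z‖ ≤ r2}
      ⊆ {z : Euc d | ENNReal.ofReal c ≤ ENNReal.ofReal (min (‖z‖ ^ 2) 1)} := by
    intro z hz
    simp only [mem_setOf_eq]
    refine ENNReal.ofReal_le_ofReal (min_le_min ?_ le_rfl)
    nlinarith [hz.1, norm_nonneg z]
  have hmeas : AEMeasurable (fun z : Euc d => ENNReal.ofReal (min (‖z‖ ^ 2) 1)) ν :=
    (ENNReal.measurable_ofReal.comp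
      ((continuous_norm.pow 2).min continuous_const).measurable).aemeasurable
  have hkey := mul_meas_ge_le_lintegral₀ hmeas (ENNReal.ofReal c)
  have hne : (ENNReal.ofReal c) ≠ 0 := (ENNReal.ofReal_pos.mpr hc).ne'
  have hmul_ne : ENNReal.ofReal c * ν {z : Euc d | ENNReal.ofReal c ≤ ENNReal.ofReal (min (‖z‖ ^ 2) 1)} ≠ ⊤ :=
    (lt_of_le_of_lt hkey hν).ne
  have hfin : ν {z : Euc d | ENNReal.ofReal c ≤ ENNReal.ofReal (min (‖z‖ ^ 2) 1)} < ⊤ := by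
    rcases eq_or_ne (ν {z : Euc d | ENNReal.ofReal c ≤ ENNReal.ofReal (min (‖z‖ ^ 2) 1)}) ⊤ with h | h
    · exfalso; apply hmul_ne; rw [h, ENNReal.mul_top hne]
    · exact h.lt_top
  exact lt_of_le_of_lt (measure_mono hsub) hfin

lemma annulus_integrable (hν : (∫⁻ z, ENNReal.ofReal (min (‖z‖ ^ 2) 1) ∂ν) < ⊤)
    {r1 : ℝ} (r2 : ℝ) (h1 : 0 < r1) :
    IntegrableOn (fun z : Euc d => z) {z : Euc d | r1 < ‖z‖ ∧ ‖z‖ ≤ r2} ν := by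
  refine Measure.integrableOn_of_bounded (M := r2) (annulus_finite hν r2 h1).ne
    aestronglyMeasurable_id ?_
  rw [ae_restrict_iff' (annulus_measurable r1 r2)]
  exact ae_of_all _ fun z hz => hz.2

end Helpers

set_option maxHeartbeats 2000000 in
/-- from the proof of Lemma 2.10: for a bounded `C²` function `f` with
bounded first and second derivatives, the generator expression applied to the rescaled
function `f_{z₀,r}` is bounded by `(d M₂ + M₁ + 2 M₀) Φ(r)`. -/
theorem generator_bound_rescaled
    (d : ℕ) (hd : 1 ≤ d) (A : Matrix (Fin d) (Fin d) ℝ) (b : Euc d)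
    (ν : Measure (Euc d)) (hT : IsLevyTriple d A b ν)
    (f : Euc d → ℝ) (hf : ContDiff ℝ 2 f)
    (M₀ M₁ M₂ : ℝ)
    (hM₀ : ∀ y : Euc d, |f y| ≤ M₀)
    (hM₁ : ∀ y : Euc d, ‖fderiv ℝ f y‖ ≤ M₁)
    (hM₂ : ∀ (y : Euc d) (i j : Fin d),
      |fderiv ℝ (fderiv ℝ f) y (EuclideanSpace.single i 1) (EuclideanSpace.single j 1)| ≤ M₂)
    (z₀ : Euc d) (r : ℝ) (hr : 0 < r) (y : Euc d) :
    Integrable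
      (fun z => rescale f z₀ r (y + z) - rescale f z₀ r y -
        (if ‖z‖ ≤ 1 then fderiv ℝ (rescale f z₀ r) y z else 0)) ν ∧
    |(1 / 2) * (∑ i, ∑ j, A i j *
          fderiv ℝ (fderiv ℝ (rescale f z₀ r)) y
            (EuclideanSpace.single i 1) (EuclideanSpace.single j 1)) +
        fderiv ℝ (rescale f z₀ r) y b +
        ∫ z, (rescale f z₀ r (y + z) - rescale f z₀ r y -
          (if ‖z‖ ≤ 1 then fderiv ℝ (rescale f z₀ r) y z else 0)) ∂ν| ≤
      ((d : ℝ) * M₂ + M₁ + 2 * M₀) * Phi d A b ν r := by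
  obtain ⟨hsymm, hpos, hν0, hνfin⟩ := hT
  have hd0 : 0 < d := hd
  have hM₀0 : 0 ≤ M₀ := le_trans (abs_nonneg _) (hM₀ 0)
  have hM₁0 : 0 ≤ M₁ := le_trans (norm_nonneg _) (hM₁ 0)
  have hM₂0 : 0 ≤ M₂ := le_trans (abs_nonneg _) (hM₂ 0 ⟨0, hd0⟩ ⟨0, hd0⟩)
  set g : Euc d → ℝ := rescale f z₀ r with hg
  set L : Euc d →L[ℝ] ℝ := fderiv ℝ g y with hL
  have hLnorm : ‖L‖ ≤ M₁ / r := fderiv_rescale_norm hf hr hM₁ y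
  have hgb : ∀ w, |g w| ≤ M₀ := fun w => hM₀ _
  have htaylor : ∀ z : Euc d, |g (y + z) - g y - L z| ≤ (d * M₂ / r ^ 2) * ‖z‖ ^ 2 :=
    fun z => rescale_taylor hf hr hM₂ hM₂0 y z
  set F : Euc d → ℝ := fun z => g (y + z) - g y - (if ‖z‖ ≤ 1 then L z else 0) with hF
  set Fr : Euc d → ℝ := fun z => g (y + z) - g y - (if ‖z‖ ≤ r then L z else 0) with hFr
  -- pointwise bounds
  have hFb : ∀ z : Euc d, |F z| ≤ (d * M₂ / r ^ 2 + 2 * M₀) * min (‖z‖ ^ 2) 1 := by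
    intro z
    by_cases h : ‖z‖ ≤ 1
    · have hmin : min (‖z‖ ^ 2) 1 = ‖z‖ ^ 2 :=
        min_eq_left (by nlinarith [norm_nonneg z])
      have : F z = g (y + z) - g y - L z := by simp [hF, if_pos h]
      rw [this, hmin]
      calc |g (y + z) - g y - L z| ≤ (d * M₂ / r ^ 2) * ‖z‖ ^ 2 := htaylor z
        _ ≤ (d * M₂ / r ^ 2 + 2 * M₀) * ‖z‖ ^ 2 := by nlinarith [sq_nonneg ‖z‖]
    · have hmin : min (‖z‖ ^ 2) 1 = 1 :=
        min_eq_right (by nlinarith [not_le.mp h, norm_nonneg z])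
      have : F z = g (y + z) - g y := by simp [hF, if_neg h]
      rw [this, hmin, mul_one]
      calc |g (y + z) - g y| ≤ |g (y + z)| + |g y| := abs_sub _ _
        _ ≤ M₀ + M₀ := add_le_add (hgb _) (hgb _)
        _ ≤ d * M₂ / r ^ 2 + 2 * M₀ := by
            have h0 : (0:ℝ) ≤ d * M₂ / r ^ 2 :=
              div_nonneg (mul_nonneg (Nat.cast_nonneg d) hM₂0) (by positivity)
            linarith
  have hFrb : ∀ z : Euc d, |Fr z| ≤ (d * M₂ + 2 * M₀) * min (‖z‖ ^ 2 / r ^ 2) 1 := by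
    intro z
    by_cases h : ‖z‖ ≤ r
    · have hmin : min (‖z‖ ^ 2 / r ^ 2) 1 = ‖z‖ ^ 2 / r ^ 2 := by
        refine min_eq_left ?_
        rw [div_le_one (by positivity)]
        nlinarith [norm_nonneg z]
      have : Fr z = g (y + z) - g y - L z := by simp [hFr, if_pos h]
      rw [this, hmin]
      calc |g (y + z) - g y - L z| ≤ (d * M₂ / r ^ 2) * ‖z‖ ^ 2 := htaylor z
        _ = (d * M₂) * (‖z‖ ^ 2 / r ^ 2) := by field_simp
        _ ≤ (d * M₂ + 2 * M₀) * (‖z‖ ^ 2 / r ^ 2) := by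
            refine mul_le_mul_of_nonneg_right (by nlinarith) (by positivity)
    · have hmin : min (‖z‖ ^ 2 / r ^ 2) 1 = 1 := by
        refine min_eq_right ?_
        rw [le_div_iff₀ (by positivity)]
        nlinarith [not_le.mp h, norm_nonneg z]
      have : Fr z = g (y + z) - g y := by simp [hFr, if_neg h]
      rw [this, hmin, mul_one]
      calc |g (y + z) - g y| ≤ |g (y + z)| + |g y| := abs_sub _ _
        _ ≤ M₀ + M₀ := add_le_add (hgb _) (hgb _)
        _ ≤ d * M₂ + 2 * M₀ := by nlinarith [(Nat.one_le_cast (α := ℝ)).mpr hd]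
  -- measurability
  have hgc : Continuous g := by
    rw [hg]
    exact hf.continuous.comp (((continuous_id.sub continuous_const)).const_smul r⁻¹)
  have hmeasite : ∀ c : ℝ, AEStronglyMeasurable (fun z : Euc d => if ‖z‖ ≤ c then L z else 0) ν :=
    fun c => (Measurable.ite (measurableSet_le measurable_norm measurable_const)
      L.continuous.measurable measurable_const).aestronglyMeasurable
  have hFm : AEStronglyMeasurable F ν := by
    rw [hF]
    exact (((hgc.comp (continuous_const.add continuous_id)).sub
      continuous_const).aestronglyMeasurable).sub (hmeasite 1)
  have hFrm : AEStronglyMeasurable Fr ν := by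
    rw [hFr]
    exact (((hgc.comp (continuous_const.add continuous_id)).sub
      continuous_const).aestronglyMeasurable).sub (hmeasite r)
  -- integrability
  have hmin1 := integrable_min_sq hνfin
  have hminr := integrable_min_sq_div hνfin r
  have hIF : Integrable F ν := by
    refine Integrable.mono' (hmin1.const_mul (d * M₂ / r ^ 2 + 2 * M₀)) hFm ?_
    filter_upwards with z
    rw [Real.norm_eq_abs]
    exact hFb z
  have hIFr : Integrable Fr ν := by
    refine Integrable.mono' (hminr.const_mul (d * M₂ + 2 * M₀)) hFrm ?_
    filter_upwards with z
    rw [Real.norm_eq_abs]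
    exact hFrb z
  refine ⟨hIF, ?_⟩
  -- bound on the jump integral
  have hT2 : 0 ≤ ∫ z, min (‖z‖ ^ 2 / r ^ 2) 1 ∂ν :=
    integral_nonneg fun z => le_min (by positivity) zero_le_one
  have hintFr : |∫ z, Fr z ∂ν| ≤ (d * M₂ + 2 * M₀) * ∫ z, min (‖z‖ ^ 2 / r ^ 2) 1 ∂ν := by
    calc |∫ z, Fr z ∂ν| = ‖∫ z, Fr z ∂ν‖ := (Real.norm_eq_abs _).symm
      _ ≤ ∫ z, ‖Fr z‖ ∂ν := norm_integral_le_integral_norm _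
      _ = ∫ z, |Fr z| ∂ν := by simp [Real.norm_eq_abs]
      _ ≤ ∫ z, (d * M₂ + 2 * M₀) * min (‖z‖ ^ 2 / r ^ 2) 1 ∂ν :=
          integral_mono hIFr.abs (hminr.const_mul _) hFrb
      _ = (d * M₂ + 2 * M₀) * ∫ z, min (‖z‖ ^ 2 / r ^ 2) 1 ∂ν := integral_const_mul _ _
  -- diffusion term
  have hHentry := fderiv2_rescale_entry (z₀ := z₀) (r := r) hf hr hM₂ y
  have hdiffsum : |∑ i, ∑ j, A i j * fderiv ℝ (fderiv ℝ g) y (EuclideanSpace.single i 1)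
      (EuclideanSpace.single j 1)| ≤ (d : ℝ) * (∑ i, A i i) * (M₂ / r ^ 2) :=
    sum_bound (entry_bound hsymm hpos) (by positivity) _ hHentry
  set X : ℝ := ∑ i, ∑ j, A i j * fderiv ℝ (fderiv ℝ g) y (EuclideanSpace.single i 1)
    (EuclideanSpace.single j 1) with hXd
  -- the drift/compensator identity
  have hmain : L b + ∫ z, F z ∂ν = L (btilde b ν r) + ∫ z, Fr z ∂ν := by
    rcases le_or_gt r 1 with hr1 | hr1
    · set S := {z : Euc d | r < ‖z‖ ∧ ‖z‖ ≤ 1} with hS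
      have hSm := annulus_measurable (d := d) r 1
      have hIz := annulus_integrable hνfin (r1 := r) 1 hr
      have hpt : ∀ z : Euc d, Fr z = F z + S.indicator (fun z => L z) z := by
        intro z
        by_cases h1 : ‖z‖ ≤ r
        · have h2 : ‖z‖ ≤ 1 := le_trans h1 hr1
          have hns : z ∉ S := fun hz => absurd h1 (not_le.mpr hz.1)
          rw [Set.indicator_of_notMem hns]
          simp [hFr, hF, if_pos h1, if_pos h2]
        · by_cases h2 : ‖z‖ ≤ 1
          · have hin : z ∈ S := ⟨not_le.mp h1, h2⟩
            rw [Set.indicator_of_mem hin]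
            simp only [hFr, hF, if_neg h1, if_pos h2]
            ring
          · have hns : z ∉ S := fun hz => absurd hz.2 h2
            rw [Set.indicator_of_notMem hns]
            simp [hFr, hF, if_neg h1, if_neg h2]
      have hIind : Integrable (S.indicator (fun z : Euc d => L z)) ν :=
        (integrable_indicator_iff hSm).mpr (L.integrable_comp hIz)
      have hsplit : ∫ z, Fr z ∂ν = (∫ z, F z ∂ν) + L (∫ z in S, z ∂ν) := by
        calc ∫ z, Fr z ∂ν = ∫ z, (F z + S.indicator (fun z => L z) z) ∂ν :=
              integral_congr_ae (Filter.Eventually.of_forall hpt)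
          _ = (∫ z, F z ∂ν) + ∫ z, S.indicator (fun z => L z) z ∂ν := integral_add hIF hIind
          _ = (∫ z, F z ∂ν) + ∫ z in S, L z ∂ν := by rw [integral_indicator hSm]
          _ = (∫ z, F z ∂ν) + L (∫ z in S, z ∂ν) := by
              rw [ContinuousLinearMap.integral_comp_comm L hIz]
      have hbt : btilde b ν r = b - ∫ z in S, z ∂ν := by simp only [btilde, if_pos hr1, hS]
      rw [hbt, map_sub, hsplit]
      ring
    · set S := {z : Euc d | 1 < ‖z‖ ∧ ‖z‖ ≤ r} with hS
      have hSm := annulus_measurable (d := d) 1 r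
      have hIz := annulus_integrable hνfin (r1 := 1) r one_pos
      have hpt : ∀ z : Euc d, Fr z = F z - S.indicator (fun z => L z) z := by
        intro z
        by_cases h1 : ‖z‖ ≤ 1
        · have h2 : ‖z‖ ≤ r := le_trans h1 hr1.le
          have hns : z ∉ S := fun hz => absurd h1 (not_le.mpr hz.1)
          rw [Set.indicator_of_notMem hns]
          simp [hFr, hF, if_pos h1, if_pos h2]
        · by_cases h2 : ‖z‖ ≤ r
          · have hin : z ∈ S := ⟨not_le.mp h1, h2⟩
            rw [Set.indicator_of_mem hin]
            simp only [hFr, hF, if_neg h1, if_pos h2]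
            ring
          · have hns : z ∉ S := fun hz => absurd hz.2 h2
            rw [Set.indicator_of_notMem hns]
            simp [hFr, hF, if_neg h1, if_neg h2]
      have hIind : Integrable (S.indicator (fun z : Euc d => L z)) ν :=
        (integrable_indicator_iff hSm).mpr (L.integrable_comp hIz)
      have hsplit : ∫ z, Fr z ∂ν = (∫ z, F z ∂ν) - L (∫ z in S, z ∂ν) := by
        calc ∫ z, Fr z ∂ν = ∫ z, (F z - S.indicator (fun z => L z) z) ∂ν :=
              integral_congr_ae (Filter.Eventually.of_forall hpt)
          _ = (∫ z, F z ∂ν) - ∫ z, S.indicator (fun z => L z) z ∂ν := integral_sub hIF hIind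
          _ = (∫ z, F z ∂ν) - ∫ z in S, L z ∂ν := by rw [integral_indicator hSm]
          _ = (∫ z, F z ∂ν) - L (∫ z in S, z ∂ν) := by
              rw [ContinuousLinearMap.integral_comp_comm L hIz]
      have hbt : btilde b ν r = b + ∫ z in S, z ∂ν := by simp only [btilde, if_neg (not_le.mpr hr1), hS]
      rw [hbt, map_add, hsplit]
      ring
  -- drift bound
  have hbtn : |L (btilde b ν r)| ≤ M₁ * (‖btilde b ν r‖ / r) := by
    calc |L (btilde b ν r)| ≤ ‖L‖ * ‖btilde b ν r‖ := L.le_opNorm _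
      _ ≤ (M₁ / r) * ‖btilde b ν r‖ := mul_le_mul_of_nonneg_right hLnorm (norm_nonneg _)
      _ = M₁ * (‖btilde b ν r‖ / r) := by ring
  -- nonnegativity of Phi's terms
  have hAii : ∀ i, 0 ≤ A i i := fun i => by
    have := hpos (EuclideanSpace.single i 1)
    rwa [quad_single] at this
  have hT1 : 0 ≤ (∑ i, A i i) / r ^ 2 := by
    apply div_nonneg (Finset.sum_nonneg fun i _ => hAii i) (by positivity)
  have hT3 : 0 ≤ ‖btilde b ν r‖ / r := by positivity
  -- final assembly
  simp only [Phi]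
  set T1 : ℝ := (∑ i, A i i) / r ^ 2 with hT1d
  set T2 : ℝ := ∫ z, min (‖z‖ ^ 2 / r ^ 2) 1 ∂ν with hT2d
  set T3 : ℝ := ‖btilde b ν r‖ / r with hT3d
  have hX : |(1 / 2 : ℝ) * X| ≤ (d * M₂ / 2) * T1 := by
    rw [abs_mul]
    calc |(1/2 : ℝ)| * |X| ≤ (1/2) * ((d : ℝ) * (∑ i, A i i) * (M₂ / r ^ 2)) := by
          rw [abs_of_pos (by norm_num : (0:ℝ) < 1/2)]
          exact mul_le_mul_of_nonneg_left hdiffsum (by norm_num)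
      _ = (d * M₂ / 2) * T1 := by rw [hT1d]; ring
  have hrw : (1 / 2 : ℝ) * X + L b + ∫ z, F z ∂ν
      = (1 / 2 : ℝ) * X + L (btilde b ν r) + ∫ z, Fr z ∂ν := by
    rw [add_assoc, hmain, ← add_assoc]
  rw [hrw]
  have habs : |(1 / 2 : ℝ) * X + L (btilde b ν r) + ∫ z, Fr z ∂ν|
      ≤ (d * M₂ / 2) * T1 + M₁ * T3 + (d * M₂ + 2 * M₀) * T2 := by
    calc |(1 / 2 : ℝ) * X + L (btilde b ν r) + ∫ z, Fr z ∂ν|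
        ≤ |(1 / 2 : ℝ) * X + L (btilde b ν r)| + |∫ z, Fr z ∂ν| := abs_add_le _ _
      _ ≤ |(1 / 2 : ℝ) * X| + |L (btilde b ν r)| + |∫ z, Fr z ∂ν| := by
            gcongr
            exact abs_add_le _ _
      _ ≤ (d * M₂ / 2) * T1 + M₁ * T3 + (d * M₂ + 2 * M₀) * T2 :=
          add_le_add (add_le_add hX hbtn) hintFr
  refine le_trans habs ?_
  have hd1 : (1 : ℝ) ≤ d := Nat.one_le_cast.mpr hd
  nlinarith [mul_nonneg (mul_nonneg (Nat.cast_nonneg d : (0:ℝ) ≤ d) hM₂0) hT1,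
    mul_nonneg hM₁0 hT1, mul_nonneg hM₀0 hT1,
    mul_nonneg hM₁0 hT2, mul_nonneg (mul_nonneg (Nat.cast_nonneg d : (0:ℝ) ≤ d) hM₂0) hT3,
    mul_nonneg hM₀0 hT3, hT1, hT2, hT3]

end
end

section
/- Let Z be a real-valued random variable with characteristic function g(s) := E[e^{isZ}]. Then for every r > 0, P(|Z| ≤ r) ≤ (2/cos 1) · r · ∫₀^{1/r} |g(s)| ds. -/
open MeasureTheory ProbabilityTheory Filter Set Topology Metric RealInnerProductSpace
open scoped ENNReal NNReal

noncomputable section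

namespace CharFnAux

/-- The Fejér-type kernel `∫₀^{1/r} (1-rs) cos(sz) ds` in closed form. -/
def ker (r z : ℝ) : ℝ :=
  if z = 0 then 1 / (2 * r) else r * (1 - Real.cos (z / r)) / z ^ 2

lemma integral_ker (r : ℝ) (hr : 0 < r) (z : ℝ) :
    ∫ s in (0:ℝ)..(1 / r), (1 - r * s) * Real.cos (s * z) = ker r z := by
  rcases eq_or_ne z 0 with hz | hz
  · subst hz
    have h : ∀ s ∈ uIcc (0:ℝ) (1/r), HasDerivAt (fun t : ℝ => t - r * t ^ 2 / 2)
        ((1 - r * s) * Real.cos (s * 0)) s := by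
      intro s _
      have h1 : HasDerivAt (fun t : ℝ => t - r * t ^ 2 / 2)
          (1 - r * (2 * s ^ 1) / 2) s :=
        (hasDerivAt_id s).sub (((hasDerivAt_pow 2 s).const_mul r).div_const 2)
      convert h1 using 1
      simp; ring
    rw [intervalIntegral.integral_eq_sub_of_hasDerivAt h
      (by apply Continuous.intervalIntegrable; continuity)]
    rw [ker, if_pos rfl]
    field_simp
    ring
  · have h : ∀ s ∈ uIcc (0:ℝ) (1/r), HasDerivAt
        (fun t : ℝ => (1 - r * t) * Real.sin (t * z) / z - r * Real.cos (t * z) / z ^ 2)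
        ((1 - r * s) * Real.cos (s * z)) s := by
      intro s _
      have hsin : HasDerivAt (fun t : ℝ => Real.sin (t * z)) (Real.cos (s * z) * z) s := by
        simpa using ((hasDerivAt_id' s).mul_const z).sin
      have hcos : HasDerivAt (fun t : ℝ => Real.cos (t * z)) (-Real.sin (s * z) * z) s := by
        simpa using ((hasDerivAt_id' s).mul_const z).cos
      have h1 : HasDerivAt (fun t : ℝ => 1 - r * t) (-r) s := by
        simpa using ((hasDerivAt_id' s).const_mul r).const_sub (1:ℝ)
      have h2 := ((h1.mul hsin).div_const z).sub ((hcos.const_mul r).div_const (z ^ 2))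
      exact h2.congr_deriv (by field_simp; ring)
    rw [intervalIntegral.integral_eq_sub_of_hasDerivAt h
      (by apply Continuous.intervalIntegrable; continuity)]
    rw [ker, if_neg hz]
    have hr' : r ≠ 0 := hr.ne'
    rw [show (1:ℝ)/r*z = z/r by ring, show 1 - r*(1/r) = 0 by field_simp; norm_num]
    field_simp
    ring_nf
    simp only [Real.sin_zero, Real.cos_zero]
    ring

lemma ker_nonneg {r : ℝ} (hr : 0 < r) (z : ℝ) : 0 ≤ ker r z := by
  unfold ker
  split
  · positivity
  · have h := Real.cos_le_one (z / r)
    exact div_nonneg (mul_nonneg hr.le (by linarith)) (sq_nonneg z)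

lemma one_sub_cos_le (x : ℝ) : 1 - Real.cos x ≤ x ^ 2 / 2 := by
  have h1 : Real.sin (x / 2) ^ 2 = 1 / 2 - Real.cos x / 2 := by
    have := Real.sin_sq_eq_half_sub (x / 2)
    rwa [show 2 * (x / 2) = x by ring] at this
  have h2 : Real.sin (x / 2) ^ 2 ≤ (x / 2) ^ 2 := Real.sin_sq_le_sq
  nlinarith

lemma ker_le {r : ℝ} (hr : 0 < r) (z : ℝ) : ker r z ≤ 1 / (2 * r) := by
  unfold ker
  split
  · exact le_refl _
  · have h := one_sub_cos_le (z / r)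
    have hz : z ≠ 0 := by assumption
    have hz2 : (0:ℝ) < z ^ 2 := by positivity
    rw [div_le_div_iff₀ hz2 (by positivity)]
    have hzr : (z / r) ^ 2 = z ^ 2 / r ^ 2 := by rw [div_pow]
    rw [hzr] at h
    have h2 := mul_le_mul_of_nonneg_left h (show (0:ℝ) ≤ 2 * r ^ 2 by positivity)
    rw [show 2 * r ^ 2 * (z ^ 2 / r ^ 2 / 2) = z ^ 2 by field_simp] at h2
    nlinarith [h2]

lemma one_sub_cos_lower {x : ℝ} (hx : |x| ≤ 1) :
    Real.cos 1 / 2 * x ^ 2 ≤ 1 - Real.cos x := by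
  have key : ∀ y : ℝ, 0 ≤ y → y ≤ 1 → Real.cos 1 / 2 * y ^ 2 ≤ 1 - Real.cos y := by
    intro y hy0 hy1
    rcases eq_or_lt_of_le hy0 with h | h
    · simp [← h]
    · have hs : Real.sin (y / 2) ^ 2 = 1 / 2 - Real.cos y / 2 := by
        have := Real.sin_sq_eq_half_sub (y / 2)
        rwa [show 2 * (y / 2) = y by ring] at this
      have hgt : y / 2 - (y / 2) ^ 3 / 4 < Real.sin (y / 2) :=
        by
          have := Real.sin_gt_sub_cube (x := y / 2) (by linarith)
          linarith [pow_pos (show (0:ℝ) < y / 2 by linarith) 3]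
      have h14 : (y / 2) ^ 2 ≤ 1 / 4 := by nlinarith
      have hlow : 15 / 16 * (y / 2) ≤ Real.sin (y / 2) := by
        nlinarith [mul_le_mul_of_nonneg_left h14 (show (0:ℝ) ≤ y / 2 by linarith)]
      have hc1 : Real.cos 1 ≤ 2 / 3 := Real.cos_one_le.trans (by norm_num)
      nlinarith [sq_nonneg (y / 2), hlow, mul_le_mul hlow hlow (by nlinarith) (by nlinarith)]
  rcases le_or_gt 0 x with h | h
  · exact key x h (by rwa [abs_of_nonneg h] at hx)
  · have := key (-x) (by linarith) (by rwa [abs_of_neg h] at hx)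
    simpa using this

lemma ker_lower {r : ℝ} (hr : 0 < r) {z : ℝ} (hzr : |z| ≤ r) :
    Real.cos 1 / (2 * r) ≤ ker r z := by
  unfold ker
  split
  · have h1 := Real.cos_le_one 1
    have h2r : (0:ℝ) < 2 * r := by positivity
    gcongr
  · have hz : z ≠ 0 := by assumption
    have hz2 : (0:ℝ) < z ^ 2 := by positivity
    have hx : |z / r| ≤ 1 := by
      rw [abs_div, abs_of_pos hr, div_le_one hr]
      exact hzr
    have hkey := one_sub_cos_lower hx
    rw [div_le_div_iff₀ (by positivity) hz2]
    have hzr2 : (z / r) ^ 2 = z ^ 2 / r ^ 2 := by rw [div_pow]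
    rw [hzr2] at hkey
    have h2 := mul_le_mul_of_nonneg_left hkey (show (0:ℝ) ≤ 2 * r ^ 2 by positivity)
    rw [show 2 * r ^ 2 * (Real.cos 1 / 2 * (z ^ 2 / r ^ 2)) = Real.cos 1 * z ^ 2 by
      field_simp] at h2
    nlinarith [h2]

lemma measurable_ker (r : ℝ) : Measurable (ker r) := by
  unfold ker
  apply Measurable.ite
  · exact measurableSet_eq
  · exact measurable_const
  · exact ((measurable_const.mul ((measurable_const.sub
      (Real.measurable_cos.comp (measurable_id.div_const r)))))).div (measurable_id.pow_const 2)

end CharFnAux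

/-- inequality (4.4): for a real random variable `Z` with characteristic
function `g(s) = E[e^{isZ}]`, one has `P(|Z| ≤ r) ≤ (2/cos 1) r ∫₀^{1/r} |g(s)| ds`. -/
theorem char_fn_concentration_bound
    (Ω : Type) [MeasurableSpace Ω] (P : Measure Ω) [IsProbabilityMeasure P]
    (Z : Ω → ℝ) (hZ : Measurable Z) (r : ℝ) (hr : 0 < r) :
    P {ω | |Z ω| ≤ r} ≤
      ENNReal.ofReal ((2 / Real.cos 1) * r *
        ∫ s in (0 : ℝ)..(1 / r),
          ‖∫ ω, Complex.exp (Complex.I * ((s * Z ω : ℝ) : ℂ)) ∂P‖) := by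
  have hr1 : (0:ℝ) < 1 / r := by positivity
  set g : ℝ → ℂ := fun s => ∫ ω, Complex.exp (Complex.I * ((s * Z ω : ℝ) : ℂ)) ∂P with hg
  have hmexp : ∀ s : ℝ, Measurable fun ω => Complex.exp (Complex.I * ((s * Z ω : ℝ) : ℂ)) := by
    intro s
    exact Complex.measurable_exp.comp
      (measurable_const.mul (Complex.measurable_ofReal.comp (hZ.const_mul s)))
  have hnorm : ∀ (s : ℝ) (ω : Ω), ‖Complex.exp (Complex.I * ((s * Z ω : ℝ) : ℂ))‖ = 1 := by
    intro s ω
    rw [Complex.norm_exp]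
    simp
  have hint : ∀ s : ℝ,
      Integrable (fun ω => Complex.exp (Complex.I * ((s * Z ω : ℝ) : ℂ))) P := by
    intro s
    refine (integrable_const (1:ℝ)).mono' (hmexp s).aestronglyMeasurable ?_
    filter_upwards with ω
    rw [hnorm s ω]
  have hgc : Continuous g := by
    refine continuous_of_dominated (fun s => (hint s).1) (fun s => ?_) (integrable_const 1) ?_
    · filter_upwards with ω
      rw [hnorm s ω]
    · filter_upwards with ω
      have hc : Continuous fun s : ℝ => Complex.I * ((s * Z ω : ℝ) : ℂ) :=
        continuous_const.mul (Complex.continuous_ofReal.comp (continuous_id.mul continuous_const))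
      exact Complex.continuous_exp.comp hc
  have hre : ∀ s : ℝ, ∫ ω, Real.cos (s * Z ω) ∂P = (g s).re := by
    intro s
    have h1 : ∀ ω, Real.cos (s * Z ω) = (Complex.exp (Complex.I * ((s * Z ω : ℝ) : ℂ))).re := by
      intro ω
      rw [mul_comm Complex.I]
      exact (Complex.exp_ofReal_mul_I_re _).symm
    simp_rw [h1]
    have h2 := integral_re (hint s)
    simp only [RCLike.re_to_complex] at h2
    exact h2
  haveI hνfin : IsFiniteMeasure (volume.restrict (Ioc (0:ℝ) (1/r))) := by
    constructor
    rw [Measure.restrict_apply MeasurableSet.univ]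
    simp [Real.volume_Ioc]
  have hswap :
      ∫ ω, ∫ s in Ioc (0:ℝ) (1/r), (1 - r * s) * Real.cos (s * Z ω) ∂volume ∂P
        = ∫ s in Ioc (0:ℝ) (1/r), ∫ ω, (1 - r * s) * Real.cos (s * Z ω) ∂P ∂volume := by
    apply MeasureTheory.integral_integral_swap
    have hm : Measurable fun p : Ω × ℝ => (1 - r * p.2) * Real.cos (p.2 * Z p.1) :=
      (measurable_const.sub (measurable_snd.const_mul r)).mul
        (Real.measurable_cos.comp (measurable_snd.mul (hZ.comp measurable_fst)))
    refine (integrable_const (1:ℝ)).mono' hm.aestronglyMeasurable ?_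
    have hae : ∀ᵐ p : Ω × ℝ ∂(P.prod (volume.restrict (Ioc (0:ℝ) (1/r)))),
        p.2 ∈ Ioc (0:ℝ) (1/r) := by
      rw [ae_iff]
      have hset : {p : Ω × ℝ | ¬ p.2 ∈ Ioc (0:ℝ) (1/r)}
          = (univ : Set Ω) ×ˢ (Ioc (0:ℝ) (1/r))ᶜ := by
        ext p; simp
      rw [hset, Measure.prod_prod, Measure.restrict_apply measurableSet_Ioc.compl]
      simp
    filter_upwards [hae] with p hp
    show ‖(1 - r * p.2) * Real.cos (p.2 * Z p.1)‖ ≤ 1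
    rw [norm_mul, Real.norm_eq_abs, Real.norm_eq_abs]
    have hrp : r * p.2 ≤ 1 := by
      have := mul_le_mul_of_nonneg_left hp.2 hr.le
      rwa [mul_one_div_cancel hr.ne'] at this
    have h1 : |1 - r * p.2| ≤ 1 := by
      rw [abs_le]
      exact ⟨by linarith, by linarith [mul_pos hr hp.1]⟩
    calc |1 - r * p.2| * |Real.cos (p.2 * Z p.1)| ≤ 1 * 1 :=
        mul_le_mul h1 (Real.abs_cos_le_one _) (abs_nonneg _) one_pos.le
      _ = 1 := one_mul 1
  set A := {ω | |Z ω| ≤ r} with hA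
  have hAm : MeasurableSet A := measurableSet_le hZ.abs measurable_const
  have hker_int : Integrable (fun ω => CharFnAux.ker r (Z ω)) P := by
    refine (integrable_const (1 / (2*r))).mono'
      ((CharFnAux.measurable_ker r).comp hZ).aestronglyMeasurable ?_
    filter_upwards with ω
    rw [Real.norm_eq_abs, abs_of_nonneg (CharFnAux.ker_nonneg hr _)]
    exact CharFnAux.ker_le hr _
  have step1 : Real.cos 1 / (2*r) * (P A).toReal ≤ ∫ ω, CharFnAux.ker r (Z ω) ∂P := by
    have h1 : ∫ _ω in A, (Real.cos 1 / (2*r)) ∂P ≤ ∫ ω in A, CharFnAux.ker r (Z ω) ∂P :=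
      setIntegral_mono_on (integrableOn_const (measure_ne_top P A))
        hker_int.integrableOn hAm (fun ω hω => CharFnAux.ker_lower hr hω)
    have h2 : ∫ ω in A, CharFnAux.ker r (Z ω) ∂P ≤ ∫ ω, CharFnAux.ker r (Z ω) ∂P :=
      setIntegral_le_integral hker_int
        (by filter_upwards with ω using CharFnAux.ker_nonneg hr _)
    rw [setIntegral_const, smul_eq_mul, measureReal_def, mul_comm] at h1
    linarith [h1, h2]
  have hIoc : ∀ ω, ∫ s in Ioc (0:ℝ) (1/r), (1 - r * s) * Real.cos (s * Z ω) ∂volume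
      = CharFnAux.ker r (Z ω) := by
    intro ω
    rw [← intervalIntegral.integral_of_le hr1.le]
    exact CharFnAux.integral_ker r hr (Z ω)
  have step2 : ∫ ω, CharFnAux.ker r (Z ω) ∂P
      = ∫ s in Ioc (0:ℝ) (1/r), (1 - r * s) * (g s).re ∂volume := by
    calc ∫ ω, CharFnAux.ker r (Z ω) ∂P
        = ∫ ω, ∫ s in Ioc (0:ℝ) (1/r), (1 - r * s) * Real.cos (s * Z ω) ∂volume ∂P :=
          integral_congr_ae (ae_of_all _ fun ω => (hIoc ω).symm)
      _ = ∫ s in Ioc (0:ℝ) (1/r), ∫ ω, (1 - r * s) * Real.cos (s * Z ω) ∂P ∂volume := hswap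
      _ = ∫ s in Ioc (0:ℝ) (1/r), (1 - r * s) * (g s).re ∂volume := by
          refine integral_congr_ae (ae_of_all _ fun s => ?_)
          show (∫ ω, (1 - r * s) * Real.cos (s * Z ω) ∂P) = (1 - r * s) * (g s).re
          rw [integral_const_mul, hre s]
  set I := ∫ s in (0:ℝ)..(1/r), ‖g s‖ with hI
  have step3 : ∫ s in Ioc (0:ℝ) (1/r), (1 - r * s) * (g s).re ∂volume ≤ I := by
    rw [hI, intervalIntegral.integral_of_le hr1.le]
    refine setIntegral_mono_on ?_ ?_ measurableSet_Ioc ?_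
    · exact ((continuous_const.sub ((continuous_const.mul continuous_id))).mul
        (Complex.continuous_re.comp hgc)).integrableOn_Ioc
    · exact (continuous_norm.comp hgc).integrableOn_Ioc
    · intro s hs
      have hrp : r * s ≤ 1 := by
        have := mul_le_mul_of_nonneg_left hs.2 hr.le
        rwa [mul_one_div_cancel hr.ne'] at this
      have h1 : |1 - r * s| ≤ 1 := by
        rw [abs_le]
        exact ⟨by linarith, by linarith [mul_pos hr hs.1]⟩
      calc (1 - r * s) * (g s).re ≤ |(1 - r * s) * (g s).re| := le_abs_self _
        _ = |1 - r * s| * |(g s).re| := abs_mul _ _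
        _ ≤ 1 * |(g s).re| := mul_le_mul_of_nonneg_right h1 (abs_nonneg _)
        _ = |(g s).re| := one_mul _
        _ ≤ ‖g s‖ := Complex.abs_re_le_norm _
  have hc := Real.cos_one_pos
  have hchain : Real.cos 1 / (2*r) * (P A).toReal ≤ I := by
    have h := step1
    rw [step2] at h
    exact h.trans step3
  have hPA : (P A).toReal ≤ 2 / Real.cos 1 * r * I := by
    have h4 := mul_le_mul_of_nonneg_left hchain
      (show (0:ℝ) ≤ 2 * r / Real.cos 1 by positivity)
    rw [show 2 * r / Real.cos 1 * (Real.cos 1 / (2*r) * (P A).toReal) = (P A).toReal by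
      field_simp] at h4
    calc (P A).toReal ≤ 2 * r / Real.cos 1 * I := h4
      _ = 2 / Real.cos 1 * r * I := by ring
  calc P A = ENNReal.ofReal ((P A).toReal) := (ENNReal.ofReal_toReal (measure_ne_top P A)).symm
    _ ≤ _ := ENNReal.ofReal_le_ofReal hPA


end
end

section
/- Let Y be a Lévy process on ℝ^d with Lévy triple (A, b, ν). Then for every t > 0 and r > 0, P( sup_{0 ≤ s ≤ 2t} |Y_s| ≤ r ) ≤ P( sup_{0 ≤ s ≤ t} |Y_s| ≤ r ) · P( sup_{0 ≤ s ≤ t} |Y_s| ≤ 2r ). -/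
open MeasureTheory ProbabilityTheory Filter Set Topology Metric RealInnerProductSpace
open scoped ENNReal NNReal

noncomputable section

namespace RMSAux


/-- a surjective enumeration of the rationals -/
noncomputable def ratSeq : ℕ → ℚ := (exists_surjective_nat ℚ).choose

lemma ratSeq_surj : Function.Surjective ratSeq := (exists_surjective_nat ℚ).choose_spec

/-- the rationals clamped into `[0, t]`, together with the endpoints -/
noncomputable def clampSeq (t : ℝ) (n : ℕ) : ℝ := max 0 (min t (ratSeq n))

lemma clampSeq_mem {t : ℝ} (ht : 0 ≤ t) (n : ℕ) : clampSeq t n ∈ Icc (0:ℝ) t := by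
  constructor
  · exact le_max_left _ _
  · exact max_le ht (min_le_left _ _)

lemma exists_clampSeq_eq {t : ℝ} {q : ℚ} (h0 : (0:ℝ) ≤ q) (h1 : (q:ℝ) ≤ t) :
    ∃ n, clampSeq t n = q := by
  obtain ⟨n, hn⟩ := ratSeq_surj q
  exact ⟨n, by simp [clampSeq, hn, min_eq_right h1, max_eq_right h0]⟩

lemma exists_clampSeq_eq_top {t : ℝ} (ht : 0 ≤ t) : ∃ n, clampSeq t n = t := by
  obtain ⟨q, hq⟩ := exists_rat_gt t
  obtain ⟨n, hn⟩ := ratSeq_surj q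
  exact ⟨n, by simp [clampSeq, hn, min_eq_left hq.le, max_eq_right ht]⟩

lemma exists_clampSeq_btwn {t s ε : ℝ} (hs : 0 ≤ s) (hst : s < t) (hε : 0 < ε) :
    ∃ n, s < clampSeq t n ∧ clampSeq t n < s + ε ∧ clampSeq t n ≤ t := by
  obtain ⟨q, hq1, hq2⟩ := exists_rat_btwn (show s < min t (s + ε) from lt_min hst (by linarith))
  have hq0 : (0:ℝ) ≤ q := le_of_lt (lt_of_le_of_lt hs hq1)
  have hqt : (q:ℝ) ≤ t := le_of_lt (lt_of_lt_of_le hq2 (min_le_left _ _))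
  obtain ⟨n, hn⟩ := exists_clampSeq_eq hq0 hqt
  exact ⟨n, by rw [hn]; exact hq1, by rw [hn]; exact lt_of_lt_of_le hq2 (min_le_right _ _),
    by rw [hn]; exact hqt⟩

variable {E : Type*} [NormedAddCommGroup E]

/-- if `‖f‖ ≤ c` on the skeleton, then `‖f‖ ≤ c` on all of `[0, t]`,
for `f` right-continuous. -/
lemma forall_le_of_skeleton {t c : ℝ} {f : ℝ → E}
    (hf : ∀ s ∈ Icc (0:ℝ) t, ContinuousWithinAt f (Ici s) s)
    (h : ∀ n, ‖f (clampSeq t n)‖ ≤ c) :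
    ∀ s ∈ Icc (0:ℝ) t, ‖f s‖ ≤ c := by
  intro s hs
  rcases eq_or_lt_of_le hs.2 with heq | hlt
  · obtain ⟨n, hn⟩ := exists_clampSeq_eq_top (heq ▸ hs.1 : (0:ℝ) ≤ t)
    rw [heq, ← hn]; exact h n
  · -- s < t : approximate from the right by skeleton points
    set S : Set ℝ := {v | (∃ n, v = clampSeq t n) ∧ s < v} with hS
    have hcl : s ∈ closure S := by
      rw [Metric.mem_closure_iff]
      intro ε hε
      obtain ⟨n, h1, h2, _⟩ := exists_clampSeq_btwn hs.1 hlt hε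
      exact ⟨clampSeq t n, ⟨⟨n, rfl⟩, h1⟩, by
        rw [Real.dist_eq, abs_lt]; constructor <;> linarith⟩
    have hne : (𝓝[S] s).NeBot := mem_closure_iff_nhdsWithin_neBot.1 hcl
    have hSsub : S ⊆ Ici s := fun v hv => le_of_lt hv.2
    have htd : Tendsto (fun v => ‖f v‖) (𝓝[S] s) (𝓝 ‖f s‖) :=
      ((hf s hs).mono hSsub).norm
    refine le_of_tendsto htd ?_
    filter_upwards [eventually_mem_nhdsWithin] with v hv
    obtain ⟨⟨n, rfl⟩, _⟩ := hv
    exact h n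

/-- a càdlàg function is bounded on a compact interval -/
lemma bdd_of_cadlag {T : ℝ} {f : ℝ → E}
    (hrc : ∀ s ∈ Icc (0:ℝ) T, ContinuousWithinAt f (Ici s) s)
    (hll : ∀ s ∈ Icc (0:ℝ) T, 0 < s → ∃ L, Tendsto f (𝓝[<] s) (𝓝 L)) :
    ∃ M : ℝ, ∀ s ∈ Icc (0:ℝ) T, ‖f s‖ ≤ M := by
  -- local bounds
  have hloc : ∀ s ∈ Icc (0:ℝ) T, ∃ ε > 0, ∃ M : ℝ,
      ∀ v ∈ Ioo (s - ε) (s + ε) ∩ Icc (0:ℝ) T, ‖f v‖ ≤ M := by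
    intro s hs
    have h1 : ∀ᶠ v in 𝓝[≥] s, ‖f v‖ ≤ ‖f s‖ + 1 := by
      filter_upwards [(hrc s hs).norm.eventually
        (eventually_le_nhds (by linarith : ‖f s‖ < ‖f s‖ + 1))] with v hv using hv
    obtain ⟨u₁, hu₁, hI₁⟩ := mem_nhdsGE_iff_exists_Ico_subset.1 h1
    rcases eq_or_lt_of_le hs.1 with h0 | h0
    · -- s = 0
      refine ⟨u₁ - s, by simpa using hu₁, ‖f s‖ + 1, ?_⟩
      rintro v ⟨hv1, hv2⟩
      exact hI₁ ⟨h0 ▸ hv2.1, by linarith [hv1.2]⟩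
    · obtain ⟨L, hL⟩ := hll s hs h0
      have h2 : ∀ᶠ v in 𝓝[<] s, ‖f v‖ ≤ ‖L‖ + 1 := by
        filter_upwards [hL.norm.eventually
          (eventually_le_nhds (by linarith : ‖L‖ < ‖L‖ + 1))] with v hv using hv
      obtain ⟨l₂, hl₂, hI₂⟩ := mem_nhdsLT_iff_exists_Ioo_subset.1 h2
      refine ⟨min (u₁ - s) (s - l₂), by
          simp only [lt_min_iff]; exact ⟨by simpa using hu₁, by simpa using hl₂⟩,
        max (‖f s‖ + 1) (‖L‖ + 1), ?_⟩
      rintro v ⟨hv1, hv2⟩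
      rcases le_or_gt s v with hsv | hsv
      · refine le_trans (hI₁ ⟨hsv, ?_⟩) (le_max_left _ _)
        have := hv1.2
        have h3 : min (u₁ - s) (s - l₂) ≤ u₁ - s := min_le_left _ _
        linarith
      · refine le_trans (hI₂ ⟨?_, hsv⟩) (le_max_right _ _)
        have := hv1.1
        have h3 : min (u₁ - s) (s - l₂) ≤ s - l₂ := min_le_right _ _
        linarith
  choose! ε hε M hM using hloc
  have hcover : Icc (0:ℝ) T ⊆
      ⋃ s : Icc (0:ℝ) T, Ioo ((s:ℝ) - ε s) ((s:ℝ) + ε s) := by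
    intro v hv
    refine mem_iUnion.2 ⟨⟨v, hv⟩, ?_⟩
    have := hε v hv
    exact ⟨by simpa using by linarith, by simpa using by linarith⟩
  obtain ⟨F, hF⟩ := isCompact_Icc.elim_finite_subcover
    (fun s : Icc (0:ℝ) T => Ioo ((s:ℝ) - ε s) ((s:ℝ) + ε s)) (fun _ => isOpen_Ioo) hcover
  refine ⟨∑ i ∈ F, |M i|, fun v hv => ?_⟩
  have := hF hv
  simp only [mem_iUnion] at this
  obtain ⟨i, hiF, hi⟩ := this
  calc ‖f v‖ ≤ M i := hM i i.2 v ⟨hi, hv⟩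
    _ ≤ |M i| := le_abs_self _
    _ ≤ ∑ j ∈ F, |M j| := Finset.single_le_sum (f := fun j : Icc (0:ℝ) T => |M (j:ℝ)|) (fun j _ => abs_nonneg _) hiF


lemma map_tuple_eq_pi {Ω : Type} [MeasurableSpace Ω] {P : Measure Ω} [IsProbabilityMeasure P]
    {n : ℕ} {β : Type} [MeasurableSpace β] {f : Fin n → Ω → β}
    (hmeas : ∀ i, Measurable (f i))
    (hind : iIndepFun f P) :
    P.map (fun ω (i : Fin n) => f i ω) = Measure.pi (fun i => P.map (f i)) := by
  haveI : ∀ i, IsProbabilityMeasure (P.map (f i)) :=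
    fun i => Measure.isProbabilityMeasure_map (hmeas i).aemeasurable
  refine (Measure.pi_eq fun s hs => ?_).symm
  rw [Measure.map_apply (measurable_pi_lambda _ fun i => hmeas i) (MeasurableSet.univ_pi hs)]
  have hpre : (fun ω (i : Fin n) => f i ω) ⁻¹' (Set.pi univ s)
      = ⋂ i ∈ Finset.univ, f i ⁻¹' s i := by
    ext ω; simp [Set.mem_univ_pi]
  rw [hpre, hind.measure_inter_preimage_eq_mul Finset.univ (fun i _ => hs i)]
  exact Finset.prod_congr rfl fun i _ => (Measure.map_apply (hmeas i) (hs i)).symm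

lemma sum_ite_Ico {E : Type*} [AddCommMonoid E] (nn lo hi : ℕ) (hhi : hi ≤ nn) (g : ℕ → E) :
    (∑ i : Fin nn, if lo ≤ i.val ∧ i.val < hi then g i.val else 0)
      = ∑ i ∈ Finset.Ico lo hi, g i := by
  rw [Fin.sum_univ_eq_sum_range (fun i => if lo ≤ i ∧ i < hi then g i else 0) nn,
    ← Finset.sum_filter]
  congr 1
  ext i
  simp only [Finset.mem_filter, Finset.mem_range, Finset.mem_Ico]
  omega

lemma sum_ite_lt {E : Type*} [AddCommMonoid E] (nn c : ℕ) (hc : c ≤ nn) (g : ℕ → E) :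
    (∑ i : Fin nn, if i.val < c then g i.val else 0) = ∑ i ∈ Finset.range c, g i := by
  rw [Fin.sum_univ_eq_sum_range (fun i => if i < c then g i else 0) nn, ← Finset.sum_filter]
  congr 1
  ext i
  simp only [Finset.mem_filter, Finset.mem_range]
  omega

set_option maxHeartbeats 1000000 in
lemma finite_dim_key {Ω : Type} [MeasurableSpace Ω] (P : Measure Ω) [IsProbabilityMeasure P]
    {d : ℕ} (Y : ℝ → Ω → EuclideanSpace ℝ (Fin d))
    (hmeas : ∀ s : ℝ, Measurable (Y s))
    (hstart : ∀ᵐ ω ∂P, Y 0 ω = 0)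
    (hstat : ∀ s t : ℝ, 0 ≤ s → s ≤ t →
      P.map (fun ω => Y t ω - Y s ω) = P.map (fun ω => Y (t - s) ω))
    (hind : ∀ n : ℕ, ∀ τ : Fin (n + 1) → ℝ, Monotone τ → 0 ≤ τ 0 →
      iIndepFun
        (fun i : Fin n => fun ω => Y (τ i.succ) ω - Y (τ i.castSucc) ω) P)
    (t : ℝ) (ht : 0 < t) (r₁ r₂ : ℝ) (N : ℕ) :
    (P ({ω | ∀ n < N, ‖Y (clampSeq t n) ω‖ ≤ r₁}
        ∩ {ω | ∀ n < N, ‖Y (t + clampSeq t n) ω - Y t ω‖ ≤ r₂})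
      = P {ω | ∀ n < N, ‖Y (clampSeq t n) ω‖ ≤ r₁}
        * P {ω | ∀ n < N, ‖Y (t + clampSeq t n) ω - Y t ω‖ ≤ r₂})
    ∧ P {ω | ∀ n < N, ‖Y (t + clampSeq t n) ω - Y t ω‖ ≤ r₂}
      = P {ω | ∀ n < N, ‖Y (clampSeq t n) ω‖ ≤ r₂} := by
  classical
  set u := clampSeq t with hu
  set F : Finset ℝ := insert 0 (insert t ((Finset.range N).image u)) with hF
  have hF0 : (0:ℝ) ∈ F := by simp [hF]
  have hFt : t ∈ F := by simp [hF]
  have hFu : ∀ n, n < N → u n ∈ F := by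
    intro n hn; simp only [hF, Finset.mem_insert, Finset.mem_image]
    exact Or.inr (Or.inr ⟨n, Finset.mem_range.2 hn, rfl⟩)
  have hFmem : ∀ x ∈ F, 0 ≤ x ∧ x ≤ t := by
    intro x hx
    simp only [hF, Finset.mem_insert, Finset.mem_image] at hx
    rcases hx with rfl | h | ⟨n, _, rfl⟩
    · exact ⟨le_refl 0, ht.le⟩
    · rw [h]; exact ⟨ht.le, le_refl t⟩
    · exact ⟨(clampSeq_mem ht.le n).1, (clampSeq_mem ht.le n).2⟩
  set m := F.card with hm
  have hm1 : 1 ≤ m := Finset.card_pos.2 ⟨0, hF0⟩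
  set a : ℕ → ℝ := fun i => F.orderEmbOfFin rfl ⟨min i (m - 1), by omega⟩ with ha
  have ha_mono : Monotone a := by
    intro i j hij
    exact (F.orderEmbOfFin rfl).monotone (by simp only [Fin.mk_le_mk]; omega)
  have ha_memF : ∀ i, a i ∈ F := fun i => Finset.orderEmbOfFin_mem _ _ _
  have ha_mem : ∀ i, 0 ≤ a i ∧ a i ≤ t := fun i => hFmem _ (ha_memF i)
  have ha_bot : a 0 = 0 := by
    have h1 : (⟨min 0 (m-1), by omega⟩ : Fin m) = ⟨0, by omega⟩ := by
      ext; simp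
    rw [ha]
    simp only [h1]
    rw [Finset.orderEmbOfFin_zero rfl (by omega)]
    exact le_antisymm (Finset.min'_le F 0 hF0)
      (Finset.le_min' _ _ _ (fun x hx => (hFmem x hx).1))
  have ha_top : a (m - 1) = t := by
    have h1 : (⟨min (m-1) (m-1), by omega⟩ : Fin m) = ⟨m - 1, by omega⟩ := by
      ext; simp
    rw [ha]
    simp only [h1]
    rw [Finset.orderEmbOfFin_last rfl (by omega)]
    exact le_antisymm (Finset.max'_le _ _ _ (fun x hx => (hFmem x hx).2))
      (Finset.le_max' _ _ hFt)
  have ha_idx : ∀ x ∈ F, ∃ i, i ≤ m - 1 ∧ a i = x := by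
    intro x hx
    have hx' : x ∈ Set.range (F.orderEmbOfFin rfl) := by
      rw [Finset.range_orderEmbOfFin]; exact hx
    obtain ⟨⟨i, hi⟩, hix⟩ := hx'
    refine ⟨i, by omega, ?_⟩
    rw [ha]
    simp only [min_eq_left (show i ≤ m - 1 by omega)]
    exact hix
  -- the time grid
  set τ : ℕ → ℝ := fun i => if i < m then a i else t + a (i - m) with hτ
  have hτ_mono : Monotone τ := by
    intro i j hij
    by_cases hi : i < m <;> by_cases hj : j < m <;>
      simp only [hτ, hi, hj, if_true, if_false, if_pos, if_neg, not_false_iff]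
    · exact ha_mono hij
    · calc a i ≤ t := (ha_mem i).2
        _ ≤ t + a (j - m) := le_add_of_nonneg_right (ha_mem _).1
    · omega
    · exact add_le_add_right (ha_mono (by omega)) t
  have hτ0 : τ 0 = 0 := by simp only [hτ, if_pos (show 0 < m by omega)]; exact ha_bot
  have hτsmall : ∀ c, c ≤ m - 1 → τ c = a c := by
    intro c hc; simp only [hτ, if_pos (show c < m by omega)]
  have hτk : τ (m - 1) = t := by rw [hτsmall (m-1) le_rfl, ha_top]
  have hτpost : ∀ c, τ (m + c) = t + a c := by
    intro c
    simp only [hτ, if_neg (show ¬ m + c < m by omega), Nat.add_sub_cancel_left]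
  have hτ_nonneg : ∀ i, 0 ≤ τ i := fun i => hτ0 ▸ hτ_mono (Nat.zero_le i)
  -- the increments
  set X : ℕ → Ω → EuclideanSpace ℝ (Fin d) := fun i ω => Y (τ (i+1)) ω - Y (τ i) ω with hX
  have hXmeas : ∀ i, Measurable (X i) := fun i => (hmeas _).sub (hmeas _)
  have hsum : ∀ (j : ℕ) (ω : Ω), ∑ i ∈ Finset.range j, X i ω = Y (τ j) ω - Y (τ 0) ω :=
    fun j ω => Finset.sum_range_sub (fun i => Y (τ i) ω) j
  -- indices of the skeleton points in the grid
  have hidx' : ∀ n : ℕ, ∃ i, i ≤ m - 1 ∧ (n < N → a i = u n) := by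
    intro n
    by_cases hn : n < N
    · obtain ⟨i, h1, h2⟩ := ha_idx (u n) (hFu n hn); exact ⟨i, h1, fun _ => h2⟩
    · exact ⟨0, by omega, fun h => absurd h hn⟩
  choose idx hidx_le hidx_eq using hidx'
  -- independence of the two halves
  set nn := 2 * m - 1 with hnn
  have hind_big : iIndepFun (fun i : Fin nn => X i.val) P := by
    have h := hind nn (fun i : Fin (nn+1) => τ i.val)
      (fun i j hij => hτ_mono hij)
      (by show (0:ℝ) ≤ τ ((0 : Fin (nn+1)) : ℕ); simp only [Fin.val_zero, hτ0, le_refl])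
    have he : (fun i : Fin nn => fun ω =>
        Y ((fun i : Fin (nn+1) => τ i.val) i.succ) ω
          - Y ((fun i : Fin (nn+1) => τ i.val) i.castSucc) ω)
        = fun i : Fin nn => X i.val := by
      funext i; simp only [hX, Fin.val_succ, Fin.coe_castSucc]
    rwa [he] at h
  set S : Finset (Fin nn) := Finset.univ.filter (fun i => i.val < m - 1) with hSdef
  set T : Finset (Fin nn) := Finset.univ.filter (fun i => ¬ i.val < m - 1) with hTdef
  have hST : Disjoint S T := by
    rw [Finset.disjoint_left]
    intro i hi hi'
    simp only [hSdef, hTdef, Finset.mem_filter, Finset.mem_univ, true_and] at hi hi'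
    exact hi' hi
  have hIndST := hind_big.indepFun_finset S T hST (fun i => hXmeas i.val)
  -- the two tuple maps
  set φ₁ : (S → EuclideanSpace ℝ (Fin d)) → (Fin N → EuclideanSpace ℝ (Fin d)) :=
    fun v j => ∑ i : S, if (i : Fin nn).val < idx j.val then v i else 0 with hφ₁
  set φ₂ : (T → EuclideanSpace ℝ (Fin d)) → (Fin N → EuclideanSpace ℝ (Fin d)) :=
    fun v j => ∑ i : T, if (i : Fin nn).val < m + idx j.val then v i else 0 with hφ₂
  have hφ₁m : Measurable φ₁ := by
    refine measurable_pi_lambda _ fun j => Finset.measurable_sum _ (fun i _ => ?_)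
    by_cases hc : (i : Fin nn).val < idx j.val
    · simpa only [if_pos hc] using measurable_pi_apply i
    · simpa only [if_neg hc] using measurable_const
  have hφ₂m : Measurable φ₂ := by
    refine measurable_pi_lambda _ fun j => Finset.measurable_sum _ (fun i _ => ?_)
    by_cases hc : (i : Fin nn).val < m + idx j.val
    · simpa only [if_pos hc] using measurable_pi_apply i
    · simpa only [if_neg hc] using measurable_const
  have hIndComp := hIndST.comp hφ₁m hφ₂m
  -- computation of the composed maps
  have key₁ : ∀ (ω : Ω) (c : ℕ), c ≤ m - 1 →
      (∑ i : S, if (i : Fin nn).val < c then X (i : Fin nn).val ω else 0)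
        = ∑ i ∈ Finset.range c, X i ω := by
    intro ω c hc
    rw [Finset.sum_coe_sort S (fun x : Fin nn => if x.val < c then X x.val ω else 0), hSdef,
      Finset.sum_filter]
    have hcongr : ∀ i : Fin nn,
        (if i.val < m - 1 then (if i.val < c then X i.val ω else 0) else 0)
        = if i.val < c then X i.val ω else 0 := by
      intro i
      by_cases h1 : i.val < c
      · rw [if_pos (show i.val < m - 1 by omega)]
      · rw [if_neg h1]; exact ite_self 0
    rw [Finset.sum_congr rfl (fun i _ => hcongr i)]
    exact sum_ite_lt nn c (by omega) (fun i => X i ω)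
  have key₂ : ∀ (ω : Ω) (c : ℕ), c ≤ m - 1 →
      (∑ i : T, if (i : Fin nn).val < m + c then X (i : Fin nn).val ω else 0)
        = ∑ i ∈ Finset.Ico (m - 1) (m + c), X i ω := by
    intro ω c hc
    rw [Finset.sum_coe_sort T (fun x : Fin nn => if x.val < m + c then X x.val ω else 0), hTdef,
      Finset.sum_filter]
    have hcongr : ∀ i : Fin nn,
        (if ¬ i.val < m - 1 then (if i.val < m + c then X i.val ω else 0) else 0)
        = if m - 1 ≤ i.val ∧ i.val < m + c then X i.val ω else 0 := by
      intro i
      by_cases h1 : i.val < m - 1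
      · rw [if_neg (show ¬ ¬ i.val < m - 1 from fun h => h h1),
          if_neg (show ¬ (m - 1 ≤ i.val ∧ i.val < m + c) from fun h => by omega)]
      · rw [if_pos h1]
        by_cases h2 : i.val < m + c
        · rw [if_pos h2, if_pos (show m - 1 ≤ i.val ∧ i.val < m + c from ⟨by omega, h2⟩)]
        · rw [if_neg h2, if_neg (show ¬ (m - 1 ≤ i.val ∧ i.val < m + c) from fun h => h2 h.2)]
    rw [Finset.sum_congr rfl (fun i _ => hcongr i)]
    exact sum_ite_Ico nn (m - 1) (m + c) (by omega) (fun i => X i ω)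
  -- telescoped identities
  have tele₁ : ∀ n, n < N → ∀ ω, ∑ i ∈ Finset.range (idx n), X i ω = Y (u n) ω - Y 0 ω := by
    intro n hn ω
    rw [hsum (idx n) ω, hτsmall (idx n) (hidx_le n), hidx_eq n hn, hτ0]
  have tele₂ : ∀ n, n < N → ∀ ω,
      ∑ i ∈ Finset.Ico (m - 1) (m + idx n), X i ω = Y (t + u n) ω - Y t ω := by
    intro n hn ω
    rw [Finset.sum_Ico_eq_sub _ (by omega : m - 1 ≤ m + idx n), hsum, hsum,
      hτpost (idx n), hidx_eq n hn, hτk, sub_sub_sub_cancel_right]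
  -- measurability of the target sets
  have hK : ∀ r : ℝ, MeasurableSet {w : Fin N → EuclideanSpace ℝ (Fin d) | ∀ j, ‖w j‖ ≤ r} := by
    intro r
    have hset : {w : Fin N → EuclideanSpace ℝ (Fin d) | ∀ j, ‖w j‖ ≤ r}
        = ⋂ j, (fun w : Fin N → EuclideanSpace ℝ (Fin d) => w j) ⁻¹' Metric.closedBall 0 r := by
      ext w; simp [mem_closedBall_zero_iff]
    rw [hset]
    exact MeasurableSet.iInter fun j => (measurable_pi_apply j) measurableSet_closedBall
  -- identification of the B-event
  have hG₂ : ∀ (ω : Ω) (j : Fin N),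
      φ₂ (fun i : T => X (i : Fin nn).val ω) j = Y (t + u j.val) ω - Y t ω := by
    intro ω j
    have h1 : φ₂ (fun i : T => X (i : Fin nn).val ω) j
        = ∑ i : T, if (i : Fin nn).val < m + idx j.val then X (i : Fin nn).val ω else 0 := rfl
    rw [h1, key₂ ω (idx j.val) (hidx_le _), tele₂ j.val j.2 ω]
  have hB_eq : {ω | ∀ n < N, ‖Y (t + u n) ω - Y t ω‖ ≤ r₂}
      = ((φ₂ ∘ fun a (i : T) => X (i : Fin nn).val a) ⁻¹'
          {w : Fin N → EuclideanSpace ℝ (Fin d) | ∀ j, ‖w j‖ ≤ r₂} : Set Ω) := by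
    ext ω
    simp only [Set.mem_setOf_eq, Set.mem_preimage, Function.comp_apply]
    constructor
    · intro h j; rw [hG₂ ω j]; exact h j.val j.2
    · intro h n hn; have h' := h ⟨n, hn⟩; rwa [hG₂ ω ⟨n, hn⟩] at h'
  have hG₁ : ∀ (ω : Ω), Y 0 ω = 0 → ∀ (j : Fin N),
      φ₁ (fun i : S => X (i : Fin nn).val ω) j = Y (u j.val) ω := by
    intro ω hω j
    have h1 : φ₁ (fun i : S => X (i : Fin nn).val ω) j
        = ∑ i : S, if (i : Fin nn).val < idx j.val then X (i : Fin nn).val ω else 0 := rfl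
    rw [h1, key₁ ω (idx j.val) (hidx_le _), tele₁ j.val j.2 ω, hω, sub_zero]
  have hA_ae : ({ω | ∀ n < N, ‖Y (u n) ω‖ ≤ r₁} : Set Ω)
      =ᵐ[P] ((φ₁ ∘ fun a (i : S) => X (i : Fin nn).val a) ⁻¹'
          {w : Fin N → EuclideanSpace ℝ (Fin d) | ∀ j, ‖w j‖ ≤ r₁} : Set Ω) := by
    rw [Filter.eventuallyEq_set]
    filter_upwards [hstart] with ω hω
    simp only [Set.mem_setOf_eq, Set.mem_preimage, Function.comp_apply]
    constructor
    · intro h j; rw [hG₁ ω hω j]; exact h j.val j.2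
    · intro h n hn; have h' := h ⟨n, hn⟩; rwa [hG₁ ω hω ⟨n, hn⟩] at h'
  constructor
  · -- independence
    have hinter : (({ω | ∀ n < N, ‖Y (u n) ω‖ ≤ r₁}
          ∩ {ω | ∀ n < N, ‖Y (t + u n) ω - Y t ω‖ ≤ r₂}) : Set Ω)
        =ᵐ[P] (((φ₁ ∘ fun a (i : S) => X (i : Fin nn).val a) ⁻¹'
            {w : Fin N → EuclideanSpace ℝ (Fin d) | ∀ j, ‖w j‖ ≤ r₁})
          ∩ ((φ₂ ∘ fun a (i : T) => X (i : Fin nn).val a) ⁻¹'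
            {w : Fin N → EuclideanSpace ℝ (Fin d) | ∀ j, ‖w j‖ ≤ r₂}) : Set Ω) := by
      rw [← hB_eq, Filter.eventuallyEq_set]
      rw [Filter.eventuallyEq_set] at hA_ae
      filter_upwards [hA_ae] with ω hω
      exact and_congr hω Iff.rfl
    rw [measure_congr hinter, measure_congr hA_ae, hB_eq]
    exact (indepFun_iff_measure_inter_preimage_eq_mul.1 hIndComp) _ _ (hK r₁) (hK r₂)
  · -- stationarity
    set σ : ℕ → ℝ := fun i => τ (m - 1 + i) - t with hσ
    have hσ0 : σ 0 = 0 := by simp only [hσ]; rw [Nat.add_zero, hτk, sub_self]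
    have hσ_mono : Monotone σ := fun i j hij => sub_le_sub_right (hτ_mono (by omega)) t
    have hσ_nonneg : ∀ i, 0 ≤ σ i := fun i => hσ0 ▸ hσ_mono (Nat.zero_le i)
    set Z : ℕ → Ω → EuclideanSpace ℝ (Fin d) := fun i ω => Y (σ (i+1)) ω - Y (σ i) ω with hZ
    have hZmeas : ∀ i, Measurable (Z i) := fun i => (hmeas _).sub (hmeas _)
    have hzsum : ∀ (j : ℕ) (ω : Ω), ∑ i ∈ Finset.range j, Z i ω = Y (σ j) ω - Y (σ 0) ω :=
      fun j ω => Finset.sum_range_sub (fun i => Y (σ i) ω) j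
    have hindH : iIndepFun
        (fun i : Fin m => fun ω => X (m - 1 + i.val) ω) P := by
      have h := hind m (fun i : Fin (m+1) => τ (m - 1 + i.val))
        (fun i j hij => hτ_mono (by have := Fin.le_def.1 hij; omega)) (hτ_nonneg _)
      have he : (fun i : Fin m => fun ω =>
          Y ((fun i : Fin (m+1) => τ (m - 1 + i.val)) i.succ) ω
            - Y ((fun i : Fin (m+1) => τ (m - 1 + i.val)) i.castSucc) ω)
          = fun i : Fin m => fun ω => X (m - 1 + i.val) ω := by
        funext i
        simp only [hX, Fin.val_succ, Fin.coe_castSucc, ← Nat.add_assoc]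
      rwa [he] at h
    have hindG : iIndepFun (fun i : Fin m => Z i.val) P := by
      have h := hind m (fun i : Fin (m+1) => σ i.val)
        (fun i j hij => hσ_mono hij)
        (by show (0:ℝ) ≤ σ ((0 : Fin (m+1)) : ℕ); simp only [Fin.val_zero, hσ0, le_refl])
      have he : (fun i : Fin m => fun ω =>
          Y ((fun i : Fin (m+1) => σ i.val) i.succ) ω
            - Y ((fun i : Fin (m+1) => σ i.val) i.castSucc) ω)
          = fun i : Fin m => Z i.val := by
        funext i
        simp only [hZ, Fin.val_succ, Fin.coe_castSucc]
      rwa [he] at h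
    have hmarg : ∀ i : Fin m,
        P.map (fun ω => X (m - 1 + i.val) ω) = P.map (Z i.val) := by
      intro i
      have h1 : P.map (fun ω => Y (τ (m - 1 + i.val + 1)) ω - Y (τ (m - 1 + i.val)) ω)
          = P.map (fun ω => Y (τ (m - 1 + i.val + 1) - τ (m - 1 + i.val)) ω) :=
        hstat _ _ (hτ_nonneg _) (hτ_mono (by omega))
      have h2 : P.map (fun ω => Y (σ (i.val + 1)) ω - Y (σ i.val) ω)
          = P.map (fun ω => Y (σ (i.val + 1) - σ i.val) ω) :=
        hstat _ _ (hσ_nonneg _) (hσ_mono (by omega))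
      have h3 : σ (i.val + 1) - σ i.val = τ (m - 1 + i.val + 1) - τ (m - 1 + i.val) := by
        simp only [hσ, ← Nat.add_assoc]; ring
      have h4 : (fun ω => X (m - 1 + i.val) ω)
          = fun ω => Y (τ (m - 1 + i.val + 1)) ω - Y (τ (m - 1 + i.val)) ω := by
        funext ω; simp only [hX]
      have h5 : (Z i.val) = fun ω => Y (σ (i.val + 1)) ω - Y (σ i.val) ω := by
        funext ω; simp only [hZ]
      rw [h4, h1, ← h3, ← h2, h5]
    have hlaw : P.map (fun ω (i : Fin m) => X (m - 1 + i.val) ω)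
        = P.map (fun ω (i : Fin m) => Z i.val ω) := by
      rw [map_tuple_eq_pi (f := fun i : Fin m => fun ω => X (m - 1 + i.val) ω)
          (fun i => hXmeas _) hindH,
        map_tuple_eq_pi (f := fun i : Fin m => Z i.val) (fun i => hZmeas _) hindG]
      congr 1
      funext i
      exact hmarg i
    have hK₃m : MeasurableSet {w : Fin m → EuclideanSpace ℝ (Fin d) |
        ∀ j : Fin N, ‖∑ i : Fin m, if i.val < idx j.val + 1 then w i else 0‖ ≤ r₂} := by
      have hset : {w : Fin m → EuclideanSpace ℝ (Fin d) |
          ∀ j : Fin N, ‖∑ i : Fin m, if i.val < idx j.val + 1 then w i else 0‖ ≤ r₂}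
          = ⋂ j : Fin N, (fun w : Fin m → EuclideanSpace ℝ (Fin d) =>
              ∑ i : Fin m, if i.val < idx j.val + 1 then w i else 0) ⁻¹'
                Metric.closedBall 0 r₂ := by
        ext w; simp [mem_closedBall_zero_iff]
      rw [hset]
      exact MeasurableSet.iInter fun j =>
        (Finset.measurable_sum _ (fun i _ => by
          by_cases hc : i.val < idx j.val + 1
          · simpa only [if_pos hc] using measurable_pi_apply i
          · simpa only [if_neg hc] using measurable_const)) measurableSet_closedBall
    have hHsum : ∀ (ω : Ω) (j : Fin N),
        (∑ i : Fin m, if i.val < idx j.val + 1 then X (m - 1 + i.val) ω else 0)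
          = Y (t + u j.val) ω - Y t ω := by
      intro ω j
      rw [sum_ite_lt m (idx j.val + 1) (by have := hidx_le j.val; omega)
        (fun i => X (m - 1 + i) ω)]
      have h0 : m + idx j.val - (m - 1) = idx j.val + 1 := by omega
      have h2 : ∑ i ∈ Finset.Ico (m - 1) (m + idx j.val), X i ω
          = ∑ i ∈ Finset.range (m + idx j.val - (m - 1)), X (m - 1 + i) ω :=
        Finset.sum_Ico_eq_sum_range _ _ _
      rw [h0] at h2
      rw [← h2, tele₂ j.val j.2 ω]
    have hGsum : ∀ (ω : Ω), Y 0 ω = 0 → ∀ (j : Fin N),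
        (∑ i : Fin m, if i.val < idx j.val + 1 then Z i.val ω else 0) = Y (u j.val) ω := by
      intro ω hω j
      rw [sum_ite_lt m (idx j.val + 1) (by have := hidx_le j.val; omega) (fun i => Z i ω),
        hzsum (idx j.val + 1) ω, hσ0]
      have h1 : σ (idx j.val + 1) = u j.val := by
        simp only [hσ]
        rw [show m - 1 + (idx j.val + 1) = m + idx j.val by omega, hτpost,
          hidx_eq j.val j.2]
        ring
      rw [h1, hω, sub_zero]
    have hHmeas : Measurable (fun ω (i : Fin m) => X (m - 1 + i.val) ω) :=
      measurable_pi_lambda _ fun i => hXmeas _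
    have hGmeas : Measurable (fun ω (i : Fin m) => Z i.val ω) :=
      measurable_pi_lambda _ fun i => hZmeas _
    have hBH : {ω | ∀ n < N, ‖Y (t + u n) ω - Y t ω‖ ≤ r₂}
        = ((fun ω (i : Fin m) => X (m - 1 + i.val) ω) ⁻¹'
            {w : Fin m → EuclideanSpace ℝ (Fin d) |
              ∀ j : Fin N, ‖∑ i : Fin m, if i.val < idx j.val + 1 then w i else 0‖ ≤ r₂}
            : Set Ω) := by
      ext ω
      simp only [Set.mem_setOf_eq, Set.mem_preimage]
      constructor
      · intro h j; rw [hHsum ω j]; exact h j.val j.2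
      · intro h n hn; have h' := h ⟨n, hn⟩; rwa [hHsum ω ⟨n, hn⟩] at h'
    have hCG : ({ω | ∀ n < N, ‖Y (u n) ω‖ ≤ r₂} : Set Ω)
        =ᵐ[P] ((fun ω (i : Fin m) => Z i.val ω) ⁻¹'
            {w : Fin m → EuclideanSpace ℝ (Fin d) |
              ∀ j : Fin N, ‖∑ i : Fin m, if i.val < idx j.val + 1 then w i else 0‖ ≤ r₂}
            : Set Ω) := by
      rw [Filter.eventuallyEq_set]
      filter_upwards [hstart] with ω hω
      simp only [Set.mem_setOf_eq, Set.mem_preimage]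
      constructor
      · intro h j; rw [hGsum ω hω j]; exact h j.val j.2
      · intro h n hn; have h' := h ⟨n, hn⟩; rwa [hGsum ω hω ⟨n, hn⟩] at h'
    rw [hBH, measure_congr hCG,
      ← Measure.map_apply hHmeas hK₃m, ← Measure.map_apply hGmeas hK₃m, hlaw]

set_option maxHeartbeats 1000000 in
lemma countable_key {Ω : Type} [MeasurableSpace Ω] (P : Measure Ω) [IsProbabilityMeasure P]
    {d : ℕ} (Y : ℝ → Ω → EuclideanSpace ℝ (Fin d))
    (hmeas : ∀ s : ℝ, Measurable (Y s))
    (hstart : ∀ᵐ ω ∂P, Y 0 ω = 0)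
    (hstat : ∀ s t : ℝ, 0 ≤ s → s ≤ t →
      P.map (fun ω => Y t ω - Y s ω) = P.map (fun ω => Y (t - s) ω))
    (hind : ∀ n : ℕ, ∀ τ : Fin (n + 1) → ℝ, Monotone τ → 0 ≤ τ 0 →
      iIndepFun
        (fun i : Fin n => fun ω => Y (τ i.succ) ω - Y (τ i.castSucc) ω) P)
    (t : ℝ) (ht : 0 < t) (r₁ r₂ : ℝ) :
    (P ({ω | ∀ n : ℕ, ‖Y (clampSeq t n) ω‖ ≤ r₁}
        ∩ {ω | ∀ n : ℕ, ‖Y (t + clampSeq t n) ω - Y t ω‖ ≤ r₂})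
      = P {ω | ∀ n : ℕ, ‖Y (clampSeq t n) ω‖ ≤ r₁}
        * P {ω | ∀ n : ℕ, ‖Y (t + clampSeq t n) ω - Y t ω‖ ≤ r₂})
    ∧ P {ω | ∀ n : ℕ, ‖Y (t + clampSeq t n) ω - Y t ω‖ ≤ r₂}
      = P {ω | ∀ n : ℕ, ‖Y (clampSeq t n) ω‖ ≤ r₂} := by
  have hkey := fun N => finite_dim_key P Y hmeas hstart hstat hind t ht r₁ r₂ N
  have hkey2 := fun N => (finite_dim_key P Y hmeas hstart hstat hind t ht r₂ r₂ N).2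
  -- generic helpers
  have hm : ∀ (g : ℕ → Ω → EuclideanSpace ℝ (Fin d)), (∀ n, Measurable (g n)) →
      ∀ (c : ℝ) (N : ℕ), MeasurableSet {ω | ∀ n < N, ‖g n ω‖ ≤ c} := by
    intro g hg c N
    have hset : {ω | ∀ n < N, ‖g n ω‖ ≤ c} = ⋂ n, ⋂ (_ : n < N), {ω | ‖g n ω‖ ≤ c} := by
      ext ω; simp
    rw [hset]
    exact MeasurableSet.iInter fun n => MeasurableSet.iInter fun _ =>
      measurableSet_le (hg n).norm measurable_const
  have hiInter : ∀ (g : ℕ → Ω → EuclideanSpace ℝ (Fin d)) (c : ℝ),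
      (⋂ N, {ω | ∀ n < N, ‖g n ω‖ ≤ c}) = {ω | ∀ n : ℕ, ‖g n ω‖ ≤ c} := by
    intro g c; ext ω
    simp only [Set.mem_iInter, Set.mem_setOf_eq]
    exact ⟨fun h n => h (n+1) n (Nat.lt_succ_self n), fun h N n _ => h n⟩
  have hanti : ∀ (g : ℕ → Ω → EuclideanSpace ℝ (Fin d)) (c : ℝ),
      Antitone (fun N => {ω | ∀ n < N, ‖g n ω‖ ≤ c}) := by
    intro g c N M h ω hω n hn
    exact hω n (lt_of_lt_of_le hn h)
  have hlim : ∀ (g : ℕ → Ω → EuclideanSpace ℝ (Fin d)), (∀ n, Measurable (g n)) →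
      ∀ (c : ℝ), Tendsto (fun N => P {ω | ∀ n < N, ‖g n ω‖ ≤ c}) atTop
        (𝓝 (P {ω | ∀ n : ℕ, ‖g n ω‖ ≤ c})) := by
    intro g hg c
    have h := tendsto_measure_iInter_atTop (μ := P)
      (fun N => (hm g hg c N).nullMeasurableSet) (hanti g c) ⟨0, measure_ne_top P _⟩
    rwa [hiInter g c] at h
  have hg₁ : ∀ n : ℕ, Measurable (fun ω => Y (clampSeq t n) ω) := fun n => hmeas _
  have hg₂ : ∀ n : ℕ, Measurable (fun ω => Y (t + clampSeq t n) ω - Y t ω) :=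
    fun n => (hmeas _).sub (hmeas _)
  have hlimA := hlim (fun n ω => Y (clampSeq t n) ω) hg₁ r₁
  have hlimB := hlim (fun n ω => Y (t + clampSeq t n) ω - Y t ω) hg₂ r₂
  have hlimC := hlim (fun n ω => Y (clampSeq t n) ω) hg₁ r₂
  constructor
  · -- limit of the product identity
    have hIAB : (⋂ N, ({ω | ∀ n < N, ‖Y (clampSeq t n) ω‖ ≤ r₁}
          ∩ {ω | ∀ n < N, ‖Y (t + clampSeq t n) ω - Y t ω‖ ≤ r₂}))
        = ({ω | ∀ n : ℕ, ‖Y (clampSeq t n) ω‖ ≤ r₁}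
          ∩ {ω | ∀ n : ℕ, ‖Y (t + clampSeq t n) ω - Y t ω‖ ≤ r₂}) := by
      ext ω
      simp only [Set.mem_iInter, Set.mem_inter_iff, Set.mem_setOf_eq]
      constructor
      · intro h
        exact ⟨fun n => (h (n+1)).1 n (Nat.lt_succ_self n),
          fun n => (h (n+1)).2 n (Nat.lt_succ_self n)⟩
      · intro h N
        exact ⟨fun n _ => h.1 n, fun n _ => h.2 n⟩
    have h1 : Tendsto (fun N => P ({ω | ∀ n < N, ‖Y (clampSeq t n) ω‖ ≤ r₁}
          ∩ {ω | ∀ n < N, ‖Y (t + clampSeq t n) ω - Y t ω‖ ≤ r₂})) atTop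
        (𝓝 (P ({ω | ∀ n : ℕ, ‖Y (clampSeq t n) ω‖ ≤ r₁}
          ∩ {ω | ∀ n : ℕ, ‖Y (t + clampSeq t n) ω - Y t ω‖ ≤ r₂}))) := by
      have h := tendsto_measure_iInter_atTop (μ := P)
        (fun N => ((hm _ hg₁ r₁ N).inter (hm _ hg₂ r₂ N)).nullMeasurableSet)
        (fun N M h => Set.inter_subset_inter (hanti _ r₁ h) (hanti _ r₂ h))
        ⟨0, measure_ne_top P _⟩
      rwa [hIAB] at h
    have h2 : Tendsto (fun N => P ({ω | ∀ n < N, ‖Y (clampSeq t n) ω‖ ≤ r₁}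
          ∩ {ω | ∀ n < N, ‖Y (t + clampSeq t n) ω - Y t ω‖ ≤ r₂})) atTop
        (𝓝 (P {ω | ∀ n : ℕ, ‖Y (clampSeq t n) ω‖ ≤ r₁}
          * P {ω | ∀ n : ℕ, ‖Y (t + clampSeq t n) ω - Y t ω‖ ≤ r₂})) := by
      have h := ENNReal.Tendsto.mul hlimA (Or.inr (measure_ne_top P _))
        hlimB (Or.inr (measure_ne_top P _))
      exact h.congr fun N => ((hkey N).1).symm
    exact tendsto_nhds_unique h1 h2
  · refine tendsto_nhds_unique hlimB (hlimC.congr fun N => ?_)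
    exact (hkey2 N).symm


end RMSAux

/-- inequality (4.9): submultiplicativity of the distribution of the running
maximum of a Lévy process: `P(M_{2t} ≤ r) ≤ P(M_t ≤ r) P(M_t ≤ 2r)`. -/

theorem running_max_submultiplicative
    (d : ℕ) (hd : 1 ≤ d)
    (Ω : Type) [MeasurableSpace Ω] (P : Measure Ω) (Y : ℝ → Ω → Euc d)
    (A : Matrix (Fin d) (Fin d) ℝ) (b : Euc d) (ν : Measure (Euc d))
    (hT : IsLevyTriple d A b ν) (hY : IsLevyProcess P Y A b ν)
    (t r : ℝ) (ht : 0 < t) (hr : 0 < r) :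
    P {ω | runMax Y (2 * t) ω ≤ r} ≤
      P {ω | runMax Y t ω ≤ r} * P {ω | runMax Y t ω ≤ 2 * r} := by
  classical
  obtain ⟨hLL, _hChar⟩ := hY
  haveI : IsProbabilityMeasure P := hLL.isProb
  have hckey := RMSAux.countable_key P Y hLL.meas hLL.start hLL.statInc hLL.indInc
    t ht r (2 * r)
  have hgood : ∀ᵐ ω ∂P, Y 0 ω = 0
      ∧ (∀ s : ℝ, 0 ≤ s → ContinuousWithinAt (fun v => Y v ω) (Ici s) s)
      ∧ (∀ s : ℝ, 0 < s → ∃ L, Tendsto (fun v => Y v ω) (𝓝[<] s) (𝓝 L)) := by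
    filter_upwards [hLL.start, hLL.rightCont, hLL.leftLim] with ω h1 h2 h3
    exact ⟨h1, h2, h3⟩
  -- Step 1 : the running max event is contained in the two skeleton events
  have hstep1 : P {ω | runMax Y (2 * t) ω ≤ r}
      ≤ P ({ω | ∀ n : ℕ, ‖Y (RMSAux.clampSeq t n) ω‖ ≤ r}
          ∩ {ω | ∀ n : ℕ, ‖Y (t + RMSAux.clampSeq t n) ω - Y t ω‖ ≤ 2 * r}) := by
    refine measure_mono_ae ?_
    filter_upwards [hgood] with ω hω hM
    obtain ⟨h0, hrc, hll⟩ := hω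
    obtain ⟨M, hMbd⟩ := RMSAux.bdd_of_cadlag (T := 2 * t) (f := fun v => Y v ω)
      (fun s hs => hrc s hs.1) (fun s _ h0s => hll s h0s)
    have hBdd : BddAbove {x : ℝ | ∃ s, 0 ≤ s ∧ s ≤ 2 * t ∧ x = ‖Y s ω‖} := by
      refine ⟨M, ?_⟩
      rintro x ⟨s, h1, h2, rfl⟩
      exact hMbd s ⟨h1, h2⟩
    have hM' : sSup {x : ℝ | ∃ s, 0 ≤ s ∧ s ≤ 2 * t ∧ x = ‖Y s ω‖} ≤ r := hM
    have hall : ∀ s : ℝ, 0 ≤ s → s ≤ 2 * t → ‖Y s ω‖ ≤ r :=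
      fun s h1 h2 => le_trans (le_csSup hBdd ⟨s, h1, h2, rfl⟩) hM'
    refine ⟨fun n => ?_, fun n => ?_⟩
    · have hc := RMSAux.clampSeq_mem ht.le n
      exact hall _ hc.1 (by linarith [hc.2])
    · have hc := RMSAux.clampSeq_mem ht.le n
      calc ‖Y (t + RMSAux.clampSeq t n) ω - Y t ω‖
          ≤ ‖Y (t + RMSAux.clampSeq t n) ω‖ + ‖Y t ω‖ := norm_sub_le _ _
        _ ≤ r + r := add_le_add (hall _ (by linarith [hc.1]) (by linarith [hc.2]))
            (hall t ht.le (by linarith))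
        _ = 2 * r := by ring
  -- Step 2 : the skeleton events are contained in the running max events
  have hstep2 : P {ω | ∀ n : ℕ, ‖Y (RMSAux.clampSeq t n) ω‖ ≤ r}
      ≤ P {ω | runMax Y t ω ≤ r} := by
    refine measure_mono_ae ?_
    filter_upwards [hgood] with ω hω hA
    obtain ⟨h0, hrc, _⟩ := hω
    have hall := RMSAux.forall_le_of_skeleton (t := t) (c := r) (f := fun v => Y v ω)
      (fun s hs => hrc s hs.1) hA
    have hgoal : sSup {x : ℝ | ∃ s, 0 ≤ s ∧ s ≤ t ∧ x = ‖Y s ω‖} ≤ r := by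
      refine csSup_le ⟨‖Y 0 ω‖, 0, le_refl 0, ht.le, rfl⟩ ?_
      rintro x ⟨s, h1, h2, rfl⟩
      exact hall s ⟨h1, h2⟩
    exact hgoal
  have hstep3 : P {ω | ∀ n : ℕ, ‖Y (RMSAux.clampSeq t n) ω‖ ≤ 2 * r}
      ≤ P {ω | runMax Y t ω ≤ 2 * r} := by
    refine measure_mono_ae ?_
    filter_upwards [hgood] with ω hω hA
    obtain ⟨h0, hrc, _⟩ := hω
    have hall := RMSAux.forall_le_of_skeleton (t := t) (c := 2 * r) (f := fun v => Y v ω)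
      (fun s hs => hrc s hs.1) hA
    have hgoal : sSup {x : ℝ | ∃ s, 0 ≤ s ∧ s ≤ t ∧ x = ‖Y s ω‖} ≤ 2 * r := by
      refine csSup_le ⟨‖Y 0 ω‖, 0, le_refl 0, ht.le, rfl⟩ ?_
      rintro x ⟨s, h1, h2, rfl⟩
      exact hall s ⟨h1, h2⟩
    exact hgoal
  calc P {ω | runMax Y (2 * t) ω ≤ r}
      ≤ P ({ω | ∀ n : ℕ, ‖Y (RMSAux.clampSeq t n) ω‖ ≤ r}
          ∩ {ω | ∀ n : ℕ, ‖Y (t + RMSAux.clampSeq t n) ω - Y t ω‖ ≤ 2 * r}) := hstep1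
    _ = P {ω | ∀ n : ℕ, ‖Y (RMSAux.clampSeq t n) ω‖ ≤ r}
        * P {ω | ∀ n : ℕ, ‖Y (t + RMSAux.clampSeq t n) ω - Y t ω‖ ≤ 2 * r} := hckey.1
    _ = P {ω | ∀ n : ℕ, ‖Y (RMSAux.clampSeq t n) ω‖ ≤ r}
        * P {ω | ∀ n : ℕ, ‖Y (RMSAux.clampSeq t n) ω‖ ≤ 2 * r} := by rw [hckey.2]
    _ ≤ P {ω | runMax Y t ω ≤ r} * P {ω | runMax Y t ω ≤ 2 * r} :=
        mul_le_mul' hstep2 hstep3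

end
end
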